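/- arXiv:math/9902016 — 9 statements merged into one kernel-verified Lean document; each statement's English description precedes it below -/
import Mathlib

section
/- Let n ≥ 3 be an integer and let 0 ≤ r₁ < r₂ < ∞. For any C¹ function ξ : [r₁,r₂] → ℝ with ξ(r₂) = 0, it holds that ∫_{r₁}^{r₂} r^{n−1} ( ξ'(r)² − ((n−2)/2)² · ξ(r)²/r² ) dr ≥ 0, with equality if and only if ξ is identically zero. -/
open Set intervalIntegral MeasureTheory

/-- Lemma 1: the weighted Hardy-type inequality
`∫_{r₁}^{r₂} r^{n-1} (ξ'² - ((n-2)/2)² ξ²/r²) dr ≥ 0` for `n ≥ 3`,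
`0 ≤ r₁ < r₂` and `ξ` of class `C¹` on `[r₁, r₂]` with `ξ(r₂) = 0`,
with equality if and only if `ξ` vanishes identically on `[r₁, r₂]`. -/
theorem weighted_hardy_inequality
    {n : ℕ} (hn : 3 ≤ n) (r₁ r₂ : ℝ) (hr₁ : 0 ≤ r₁) (hr : r₁ < r₂)
    (ξ : ℝ → ℝ) (hξ : ContDiffOn ℝ 1 ξ (Icc r₁ r₂)) (hξ2 : ξ r₂ = 0) :
    0 ≤ (∫ r in r₁..r₂, r ^ (n - 1) *
        ((derivWithin ξ (Icc r₁ r₂) r) ^ 2 -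
          (((n : ℝ) - 2) / 2) ^ 2 * (ξ r) ^ 2 / r ^ 2)) ∧
      ((∫ r in r₁..r₂, r ^ (n - 1) *
          ((derivWithin ξ (Icc r₁ r₂) r) ^ 2 -
            (((n : ℝ) - 2) / 2) ^ 2 * (ξ r) ^ 2 / r ^ 2)) = 0 ↔
        ∀ r ∈ Icc r₁ r₂, ξ r = 0) := by
  obtain ⟨m, rfl⟩ : ∃ m, n = m + 3 := ⟨n - 3, by omega⟩
  have hr' : r₁ ≤ r₂ := hr.le
  set D : ℝ → ℝ := fun r => derivWithin ξ (Icc r₁ r₂) r with hD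
  set c : ℝ := ((m : ℝ) + 1) / 2 with hcdef
  have hcc : ((↑(m + 3) : ℝ) - 2) / 2 = c := by rw [hcdef]; push_cast; ring
  have hcpos : 0 < c := by rw [hcdef]; positivity
  -- basic regularity facts
  have hud : UniqueDiffOn ℝ (Icc r₁ r₂) := uniqueDiffOn_Icc hr
  have hξc : ContinuousOn ξ (Icc r₁ r₂) := hξ.continuousOn
  have hDc : ContinuousOn D (Icc r₁ r₂) := hξ.continuousOn_derivWithin hud le_rfl
  -- the auxiliary functions
  set F : ℝ → ℝ := fun r => r ^ (m + 3 - 1) *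
      ((D r) ^ 2 - (((↑(m + 3) : ℝ) - 2) / 2) ^ 2 * (ξ r) ^ 2 / r ^ 2) with hF
  set G : ℝ → ℝ := fun r => r ^ (m + 2) * D r ^ 2 - c ^ 2 * r ^ m * ξ r ^ 2 with hG
  set H : ℝ → ℝ := fun r => r ^ m * (r * D r + c * ξ r) ^ 2 with hH
  set P : ℝ → ℝ := fun r => ((m : ℝ) + 1) * r ^ m * ξ r ^ 2
      + r ^ (m + 1) * (2 * ξ r * D r) with hP
  set g : ℝ → ℝ := fun r => r ^ (m + 1) * ξ r ^ 2 with hg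
  -- continuity of auxiliaries
  have hGc : ContinuousOn G (Icc r₁ r₂) := by
    apply ContinuousOn.sub
    · exact (continuousOn_pow _).mul (hDc.pow 2)
    · exact (continuousOn_const.mul (continuousOn_pow _)).mul (hξc.pow 2)
  have hHc : ContinuousOn H (Icc r₁ r₂) := by
    apply (continuousOn_pow _).mul
    exact ((continuousOn_id.mul hDc).add (continuousOn_const.mul hξc)).pow 2
  have hPc : ContinuousOn P (Icc r₁ r₂) := by
    apply ContinuousOn.add
    · exact (continuousOn_const.mul (continuousOn_pow _)).mul (hξc.pow 2)
    · exact (continuousOn_pow _).mul ((continuousOn_const.mul hξc).mul hDc)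
  have hgc : ContinuousOn g (Icc r₁ r₂) := (continuousOn_pow _).mul (hξc.pow 2)
  have hGi : IntervalIntegrable G MeasureTheory.volume r₁ r₂ :=
    hGc.intervalIntegrable_of_Icc hr'
  have hHi : IntervalIntegrable H MeasureTheory.volume r₁ r₂ :=
    hHc.intervalIntegrable_of_Icc hr'
  have hPi : IntervalIntegrable P MeasureTheory.volume r₁ r₂ :=
    hPc.intervalIntegrable_of_Icc hr'
  -- derivative of g
  have hder : ∀ x ∈ Ioo r₁ r₂, HasDerivAt g (P x) x := by
    intro x hx
    have hmem : Icc r₁ r₂ ∈ nhds x := Icc_mem_nhds hx.1 hx.2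
    have hξd : HasDerivAt ξ (D x) x :=
      ((hξ.differentiableOn one_ne_zero x (Ioo_subset_Icc_self hx)).hasDerivWithinAt).hasDerivAt hmem
    have h1 : HasDerivAt g _ x := (hasDerivAt_pow (m + 1) x).mul (hξd.pow 2)
    convert h1 using 1
    rw [hP]
    push_cast
    ring
  -- FTC for g
  have hFTC : ∫ r in r₁..r₂, P r = g r₂ - g r₁ :=
    integral_eq_sub_of_hasDeriv_right_of_le hr' hgc
      (fun x hx => (hder x hx).hasDerivWithinAt) hPi
  have hgr2 : g r₂ = 0 := by rw [hg]; simp [hξ2]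
  -- F = G on the (half-open) interval of integration
  have hFG : ∫ r in r₁..r₂, F r = ∫ r in r₁..r₂, G r := by
    apply intervalIntegral.integral_congr_ae
    apply Filter.Eventually.of_forall
    intro x hx
    rw [uIoc_of_le hr'] at hx
    have hx0 : x ≠ 0 := (lt_of_le_of_lt hr₁ hx.1).ne'
    rw [hF, hG, hcc]
    have : m + 3 - 1 = m + 2 := rfl
    rw [this]
    field_simp
    ring
  -- G = H - c • P pointwise
  have hGHP : ∀ r, G r = H r - c * P r := by
    intro r
    rw [hG, hH, hP, hcdef]
    ring
  -- main identity
  have key : ∫ r in r₁..r₂, F r = (∫ r in r₁..r₂, H r) + c * g r₁ := by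
    rw [hFG]
    have : ∫ r in r₁..r₂, G r = (∫ r in r₁..r₂, H r) - c * ∫ r in r₁..r₂, P r := by
      rw [show G = fun r => H r - c * P r from funext hGHP]
      rw [intervalIntegral.integral_sub hHi (hPi.const_mul c),
        intervalIntegral.integral_const_mul]
    rw [this, hFTC, hgr2]
    ring
  -- nonnegativity of H
  have hHnn : ∀ u ∈ Icc r₁ r₂, 0 ≤ H u := fun u hu =>
    mul_nonneg (pow_nonneg (le_trans hr₁ hu.1) m) (sq_nonneg _)
  have hInn : 0 ≤ ∫ r in r₁..r₂, H r := intervalIntegral.integral_nonneg hr' hHnn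
  have hg1 : 0 ≤ g r₁ := mul_nonneg (pow_nonneg hr₁ _) (sq_nonneg _)
  constructor
  · rw [key]; positivity
  constructor
  · -- integral zero implies ξ vanishes
    intro h0
    rw [key] at h0
    have hI0 : ∫ r in r₁..r₂, H r = 0 := by nlinarith [mul_nonneg hcpos.le hg1]
    -- H vanishes a.e. on Ioc, hence everywhere on Ioc by continuity
    have haeH : 0 ≤ᵐ[MeasureTheory.volume.restrict (Ioc r₁ r₂)] H :=
      (MeasureTheory.ae_restrict_iff' measurableSet_Ioc).2
        (Filter.Eventually.of_forall fun x hx => hHnn x (Ioc_subset_Icc_self hx))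
    have haeH0 : H =ᵐ[MeasureTheory.volume.restrict (Ioc r₁ r₂)] 0 :=
      (integral_eq_zero_iff_of_le_of_nonneg_ae hr' haeH hHi).1 hI0
    have hH0 : EqOn H 0 (Ioc r₁ r₂) := by
      apply MeasureTheory.Measure.eqOn_of_ae_eq haeH0 (hHc.mono Ioc_subset_Icc_self)
        continuousOn_const
      rw [interior_Ioc, closure_Ioo hr.ne]
      exact Ioc_subset_Icc_self
    -- hence r * D r + c * ξ r = 0 on Ioc
    have hzero : ∀ x ∈ Ioc r₁ r₂, x * D x + c * ξ x = 0 := by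
      intro x hx
      have hx0 : (0:ℝ) < x := lt_of_le_of_lt hr₁ hx.1
      have := hH0 hx
      rw [hH] at this
      simp only [Pi.zero_apply] at this
      have hpow : x ^ m ≠ 0 := pow_ne_zero _ hx0.ne'
      have := (mul_eq_zero.1 this).resolve_left hpow
      exact pow_eq_zero_iff (n := 2) (by norm_num) |>.1 this
    -- hence P = 0 on Ioc
    have hPz : ∀ x ∈ Ioc r₁ r₂, P x = 0 := by
      intro x hx
      have hxd : x * D x = -(c * ξ x) := by linarith [hzero x hx]
      have h1 : P x = ((m:ℝ) + 1) * x ^ m * ξ x ^ 2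
          + x ^ m * (2 * ξ x * (x * D x)) := by rw [hP]; ring
      rw [h1, hxd, hcdef]; ring
    -- hence g is constant 0 on Ioc, so ξ = 0 there
    have hξz : ∀ x ∈ Ioc r₁ r₂, ξ x = 0 := by
      intro x hx
      have hsub : Icc x r₂ ⊆ Icc r₁ r₂ := Icc_subset_Icc hx.1.le le_rfl
      have hFTC2 : ∫ t in x..r₂, P t = g r₂ - g x :=
        integral_eq_sub_of_hasDeriv_right_of_le hx.2 (hgc.mono hsub)
          (fun t ht => (hder t ⟨lt_trans hx.1 ht.1, ht.2⟩).hasDerivWithinAt)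
          (hPi.mono_set (by rw [uIcc_of_le hx.2, uIcc_of_le hr']; exact hsub))
      have hz : ∫ t in x..r₂, P t = 0 := by
        rw [intervalIntegral.integral_congr (g := fun _ => (0:ℝ))
          (fun t ht => by
            rw [uIcc_of_le hx.2] at ht
            exact hPz t ⟨lt_of_lt_of_le hx.1 ht.1, ht.2⟩)]
        simp
      have hgx : g x = 0 := by rw [hgr2] at hFTC2; linarith [hFTC2 ▸ hz]
      rw [hg] at hgx
      have hx0 : (0:ℝ) < x := lt_of_le_of_lt hr₁ hx.1
      simp only at hgx
      have := (mul_eq_zero.1 hgx).resolve_left (pow_ne_zero _ hx0.ne')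
      exact pow_eq_zero_iff (n := 2) (by norm_num) |>.1 this
    -- extend to r₁ by continuity
    have hξr1 : ξ r₁ = 0 := by
      have hne : (nhdsWithin r₁ (Ioo r₁ r₂)).NeBot :=
        mem_closure_iff_nhdsWithin_neBot.1 (by
          rw [closure_Ioo hr.ne]; exact ⟨le_rfl, hr'⟩)
      have h1 : Filter.Tendsto ξ (nhdsWithin r₁ (Ioo r₁ r₂)) (nhds (ξ r₁)) :=
        ((hξc r₁ ⟨le_rfl, hr'⟩).mono_left (nhdsWithin_mono _ Ioo_subset_Icc_self))
      have h2 : Filter.Tendsto ξ (nhdsWithin r₁ (Ioo r₁ r₂)) (nhds 0) := by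
        apply Filter.Tendsto.congr' _ tendsto_const_nhds
        filter_upwards [self_mem_nhdsWithin] with t ht
        exact (hξz t ⟨ht.1, ht.2.le⟩).symm
      exact tendsto_nhds_unique h1 h2
    intro r hrm
    rcases eq_or_lt_of_le hrm.1 with h | h
    · rw [← h]; exact hξr1
    · exact hξz r ⟨h, hrm.2⟩
  · -- ξ ≡ 0 implies the integral vanishes
    intro hz
    have hDz : ∀ r ∈ Icc r₁ r₂, D r = 0 := by
      intro r hrm
      rw [hD]
      simp only
      rw [derivWithin_congr (fun t ht => hz t ht) (hz r hrm)]
      exact congrFun (derivWithin_const _ _) r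
    rw [intervalIntegral.integral_congr (g := fun _ => (0:ℝ))
      (fun t ht => by
        rw [uIcc_of_le hr'] at ht
        simp [hz t ht, hDz t ht])]
    simp
end

section
/- Let n ≥ 3, let Ω ⊆ ℝⁿ be a bounded open set, let x₀ ∈ ℝⁿ, and let c : Ω → ℝ be a function satisfying c(x) ≤ ((n−2)/2)²/‖x−x₀‖² for all x ∈ Ω with x ≠ x₀. If ξ is a C² function on the closure of Ω satisfying the linearised equation Δξ(x) + c(x)ξ(x) = 0 on Ω and ξ = 0 on ∂Ω, then ξ is identically zero on Ω. -/
open Set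

open Filter

/-- The Laplacian of a real-valued function on Euclidean space,
`Δu(x) = ∑ i, ∂²u/∂xᵢ²(x)`. -/
noncomputable def lap {n : ℕ} (u : EuclideanSpace ℝ (Fin n) → ℝ)
    (x : EuclideanSpace ℝ (Fin n)) : ℝ :=
  ∑ i : Fin n, fderiv ℝ (fun y => fderiv ℝ u y (EuclideanSpace.single i 1)) x
    (EuclideanSpace.single i 1)

theorem deriv2_nonpos_of_isLocalMax {h : ℝ → ℝ} (hh : ContDiffAt ℝ 2 h 0)
    (hmax : IsLocalMax h 0) : deriv (deriv h) 0 ≤ 0 := by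
  by_contra hpos
  push_neg at hpos
  set L := deriv (deriv h) 0 with hLdef
  have hd1 : DifferentiableAt ℝ (deriv h) 0 := by
    have h1 : ContDiffAt ℝ 1 (fderiv ℝ h) 0 := hh.fderiv_right (by norm_num)
    have h2 : DifferentiableAt ℝ (fun y => fderiv ℝ h y 1) 0 :=
      (ContinuousLinearMap.apply ℝ ℝ (1:ℝ)).differentiableAt.comp 0 (h1.differentiableAt one_ne_zero)
    have : (fun y => fderiv ℝ h y 1) = deriv h := by
      funext y; exact fderiv_apply_one_eq_deriv
    rwa [this] at h2
  have hL : HasDerivAt (deriv h) L 0 := hd1.hasDerivAt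
  rw [hasDerivAt_iff_tendsto_slope] at hL
  have hs : ∀ᶠ z in nhdsWithin (0:ℝ) {(0:ℝ)}ᶜ, L/2 < slope (deriv h) 0 z :=
    hL.eventually (eventually_gt_nhds (by linarith))
  rw [eventually_nhdsWithin_iff] at hs
  obtain ⟨ε₁, hε₁, hball1'⟩ := Metric.eventually_nhds_iff.mp hs
  have hball1 : ∀ ⦃z : ℝ⦄, z ∈ ({(0:ℝ)}ᶜ : Set ℝ) → dist z 0 < ε₁ → L/2 < slope (deriv h) 0 z :=
    fun z hz hd => hball1' hd hz
  have hdiff : ∀ᶠ y in nhds (0:ℝ), ContDiffAt ℝ 2 h y := hh.eventually (by decide)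
  obtain ⟨ε₂, hε₂, hball2⟩ := Metric.eventually_nhds_iff.mp (hdiff.and hmax)
  set δ := min ε₁ ε₂ / 2 with hδdef
  have hδ : 0 < δ := by positivity
  have hδ1 : δ < ε₁ := by
    have := min_le_left ε₁ ε₂; simp only [hδdef]; nlinarith [lt_min hε₁ hε₂]
  have hδ2 : δ < ε₂ := by
    have := min_le_right ε₁ ε₂; simp only [hδdef]; nlinarith [lt_min hε₁ hε₂]
  have h0 : deriv h 0 = 0 := hmax.deriv_eq_zero
  have cont : ContinuousOn h (Icc 0 δ) := by
    intro y hy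
    have : dist y (0:ℝ) < ε₂ := by
      rw [Real.dist_eq, sub_zero, abs_of_nonneg hy.1]
      exact lt_of_le_of_lt hy.2 hδ2
    exact ((hball2 this).1.continuousAt).continuousWithinAt
  have derivpos : ∀ x ∈ interior (Icc (0:ℝ) δ), 0 < deriv h x := by
    intro x hx
    rw [interior_Icc] at hx
    have hx0 : (0:ℝ) < x := hx.1
    have hxd : dist x (0:ℝ) < ε₁ := by
      rw [Real.dist_eq, sub_zero, abs_of_pos hx0]
      exact lt_trans hx.2 hδ1
    have hslope := hball1 (by simp [hx0.ne'] : x ∈ ({(0:ℝ)}ᶜ : Set ℝ)) hxd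
    rw [slope_def_field, h0, sub_zero, sub_zero] at hslope
    have : 0 < deriv h x / x := lt_trans (by positivity) hslope
    exact (div_pos_iff.mp this).resolve_right (fun ⟨_, h2⟩ => absurd hx0 (not_lt.mpr h2.le)) |>.1
  have hmono := strictMonoOn_of_deriv_pos (convex_Icc 0 δ) cont derivpos
  have hlt : h 0 < h δ := hmono (by simp [hδ.le]) (by simp [hδ.le]) hδ
  have hle : h δ ≤ h 0 := by
    refine (hball2 ?_).2
    rw [Real.dist_eq, sub_zero, abs_of_pos hδ]; exact hδ2
  linarith


theorem lap_nonpos_of_isLocalMax {n : ℕ} {g : EuclideanSpace ℝ (Fin n) → ℝ}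
    {p : EuclideanSpace ℝ (Fin n)} (hg : ContDiffAt ℝ 2 g p) (hmax : IsLocalMax g p) :
    lap g p ≤ 0 := by
  rw [lap]
  refine Finset.sum_nonpos fun i _ => ?_
  set e := EuclideanSpace.single i (1:ℝ) with he
  set σ : ℝ → EuclideanSpace ℝ (Fin n) := fun s => p + s • e with hσdef
  have hσ0 : σ 0 = p := by simp [hσdef]
  have hσc : ContDiff ℝ 2 σ := contDiff_const.add (contDiff_id.smul contDiff_const)
  have hσd : ∀ s : ℝ, HasDerivAt σ e s := by
    intro s
    have : HasDerivAt (fun x : ℝ => x • e) ((1:ℝ) • e) s := (hasDerivAt_id s).smul_const e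
    rw [one_smul] at this; exact this.const_add p
  set h : ℝ → ℝ := fun s => g (σ s) with hhdef
  have hh : ContDiffAt ℝ 2 h 0 := by
    have := ContDiffAt.comp (0:ℝ) (by rwa [hσ0] : ContDiffAt ℝ 2 g (σ 0)) hσc.contDiffAt
    exact this
  have htend : Tendsto σ (nhds 0) (nhds p) := by
    rw [← hσ0]; exact (hσc.continuous).continuousAt
  have hmax' : IsLocalMax h 0 := by
    have h2 := htend.eventually hmax
    unfold IsLocalMax IsMaxFilter
    filter_upwards [h2] with s hs
    simpa [hhdef, hσ0] using hs
  set Φ := fderiv ℝ g with hΦdef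
  have hΦ : ContDiffAt ℝ 1 Φ p := hg.fderiv_right (by norm_num)
  have hΦd : HasFDerivAt Φ (fderiv ℝ Φ p) p := (hΦ.differentiableAt one_ne_zero).hasFDerivAt
  set A := fderiv ℝ Φ p with hAdef
  -- term = (A e) e
  have hterm : fderiv ℝ (fun y => fderiv ℝ g y e) p e = (A e) e := by
    have h1 : HasFDerivAt (fun y => Φ y e) ((Φ p).comp (0 : EuclideanSpace ℝ (Fin n) →L[ℝ] EuclideanSpace ℝ (Fin n)) + A.flip e) p :=
      hΦd.clm_apply (hasFDerivAt_const e p)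
    have := h1.fderiv
    rw [this]
    simp [ContinuousLinearMap.flip_apply]
  -- deriv h eventually equals s ↦ Φ (σ s) e
  have hev : (deriv h) =ᶠ[nhds (0:ℝ)] fun s => Φ (σ s) e := by
    have hev1 : ∀ᶠ y in nhds p, DifferentiableAt ℝ g y :=
      (hg.eventually (by decide)).mono fun y hy => hy.differentiableAt (by norm_num)
    filter_upwards [htend.eventually hev1] with s hs
    have : HasDerivAt h (Φ (σ s) e) s := (hs.hasFDerivAt).comp_hasDerivAt s (hσd s)
    exact this.deriv
  have hB : HasDerivAt (fun s => Φ (σ s) e) ((A e) e) 0 := by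
    have hB1 : HasDerivAt (fun s => Φ (σ s)) (A e) 0 := by
      have := (by rwa [← hσ0] at hΦd : HasFDerivAt Φ A (σ 0)).comp_hasDerivAt 0 (hσd 0)
      exact this
    have := hB1.clm_apply (hasDerivAt_const 0 e)
    simpa using this
  have hd2 : deriv (deriv h) 0 = (A e) e := by
    rw [hev.deriv_eq, hB.deriv]
  rw [hterm, ← hd2]
  exact deriv2_nonpos_of_isLocalMax hh hmax'


theorem lap_neg {n : ℕ} (u : EuclideanSpace ℝ (Fin n) → ℝ) (x : EuclideanSpace ℝ (Fin n)) :
    lap (fun y => -u y) x = - lap u x := by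
  rw [lap, lap, ← Finset.sum_neg_distrib]
  refine Finset.sum_congr rfl fun i _ => ?_
  have h1 : (fun y => fderiv ℝ (fun z => -u z) y (EuclideanSpace.single i 1))
      = fun y => -(fderiv ℝ u y (EuclideanSpace.single i 1)) := by
    funext y; rw [fderiv_fun_neg]; simp
  rw [h1, fderiv_fun_neg]; simp

theorem lap_sub {n : ℕ} {u v : EuclideanSpace ℝ (Fin n) → ℝ} {x : EuclideanSpace ℝ (Fin n)}
    (hu : ContDiffAt ℝ 2 u x) (hv : ContDiffAt ℝ 2 v x) :
    lap (fun y => u y - v y) x = lap u x - lap v x := by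
  rw [lap, lap, lap, ← Finset.sum_sub_distrib]
  refine Finset.sum_congr rfl fun i _ => ?_
  set e := EuclideanSpace.single i (1:ℝ)
  have h1 : (fun y => fderiv ℝ (fun z => u z - v z) y e)
      =ᶠ[nhds x] fun y => fderiv ℝ u y e - fderiv ℝ v y e := by
    filter_upwards [hu.eventually (by decide), hv.eventually (by decide)] with y hy1 hy2
    rw [fderiv_fun_sub (hy1.differentiableAt (by norm_num)) (hy2.differentiableAt (by norm_num))]
    simp
  have hdu : DifferentiableAt ℝ (fun y => fderiv ℝ u y e) x :=
    (ContinuousLinearMap.apply ℝ ℝ e).differentiableAt.comp x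
      ((hu.fderiv_right (m := 1) (by norm_num)).differentiableAt one_ne_zero)
  have hdv : DifferentiableAt ℝ (fun y => fderiv ℝ v y e) x :=
    (ContinuousLinearMap.apply ℝ ℝ e).differentiableAt.comp x
      ((hv.fderiv_right (m := 1) (by norm_num)).differentiableAt one_ne_zero)
  rw [h1.fderiv_eq, fderiv_fun_sub hdu hdv]; simp

theorem lap_const_mul {n : ℕ} {u : EuclideanSpace ℝ (Fin n) → ℝ} {x : EuclideanSpace ℝ (Fin n)}
    (c : ℝ) (hu : ContDiffAt ℝ 2 u x) :
    lap (fun y => c * u y) x = c * lap u x := by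
  rw [lap, lap, Finset.mul_sum]
  refine Finset.sum_congr rfl fun i _ => ?_
  set e := EuclideanSpace.single i (1:ℝ)
  have h1 : (fun y => fderiv ℝ (fun z => c * u z) y e)
      =ᶠ[nhds x] fun y => c * fderiv ℝ u y e := by
    filter_upwards [hu.eventually (by decide)] with y hy
    rw [fderiv_const_mul (hy.differentiableAt (by norm_num)) c]
    simp
  have hdu : DifferentiableAt ℝ (fun y => fderiv ℝ u y e) x :=
    (ContinuousLinearMap.apply ℝ ℝ e).differentiableAt.comp x
      ((hu.fderiv_right (m := 1) (by norm_num)).differentiableAt one_ne_zero)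
  rw [h1.fderiv_eq, fderiv_const_mul hdu c]; simp

theorem lap_sub_const {n : ℕ} (u : EuclideanSpace ℝ (Fin n) → ℝ) (x : EuclideanSpace ℝ (Fin n))
    (a : ℝ) : lap (fun y => u y - a) x = lap u x := by
  rw [lap, lap]
  refine Finset.sum_congr rfl fun i _ => ?_
  have h1 : (fun y => fderiv ℝ (fun z => u z - a) y (EuclideanSpace.single i 1))
      = fun y => fderiv ℝ u y (EuclideanSpace.single i 1) := by
    funext y; rw [fderiv_sub_const]
  rw [h1]


section radial

variable {n : ℕ} (x₀ : EuclideanSpace ℝ (Fin n))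

noncomputable def Qf (x₀ : EuclideanSpace ℝ (Fin n)) : EuclideanSpace ℝ (Fin n) → ℝ :=
  fun y => ∑ i : Fin n, (y i - x₀ i)^2

noncomputable def Df (x₀ : EuclideanSpace ℝ (Fin n)) (y : EuclideanSpace ℝ (Fin n)) :
    EuclideanSpace ℝ (Fin n) →L[ℝ] ℝ :=
  ∑ i : Fin n, (2*(y i - x₀ i)) • (EuclideanSpace.proj (𝕜 := ℝ) i)

theorem Qf_eq (y : EuclideanSpace ℝ (Fin n)) : Qf x₀ y = ‖y - x₀‖^2 := by
  rw [Qf, EuclideanSpace.norm_eq, Real.sq_sqrt (by positivity)]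
  refine Finset.sum_congr rfl fun i _ => ?_
  rw [Real.norm_eq_abs, sq_abs]
  congr 1

theorem Qf_pos {y : EuclideanSpace ℝ (Fin n)} (hy : y ≠ x₀) : 0 < Qf x₀ y := by
  rw [Qf_eq]
  exact pow_pos (norm_sub_pos_iff.mpr hy) 2

theorem hasFDerivAt_Qf (y : EuclideanSpace ℝ (Fin n)) : HasFDerivAt (Qf x₀) (Df x₀ y) y := by
  rw [show Qf x₀ = fun z => ∑ i : Fin n, (z i - x₀ i)^2 from rfl]
  refine HasFDerivAt.fun_sum fun i _ => ?_
  have h1 : HasFDerivAt (fun z : EuclideanSpace ℝ (Fin n) => z i - x₀ i)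
      (EuclideanSpace.proj (𝕜 := ℝ) i) y :=
    ((EuclideanSpace.proj (𝕜 := ℝ) i).hasFDerivAt).sub_const _
  have h2 : HasFDerivAt (fun z : EuclideanSpace ℝ (Fin n) => (z i - x₀ i) * (z i - x₀ i)) _ y := h1.mul h1
  have h3 : (fun z : EuclideanSpace ℝ (Fin n) => (z i - x₀ i)^2)
      = fun z => (z i - x₀ i) * (z i - x₀ i) := by funext z; ring
  rw [h3]
  refine h2.congr_fderiv ?_
  ext z
  simp [two_mul, add_smul, smul_smul]

theorem Df_apply (y : EuclideanSpace ℝ (Fin n)) (j : Fin n) :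
    Df x₀ y (EuclideanSpace.single j 1) = 2*(y j - x₀ j) := by
  rw [Df, ContinuousLinearMap.sum_apply]
  have : ∀ i : Fin n, ((2*(y i - x₀ i)) • (EuclideanSpace.proj (𝕜 := ℝ) i))
      (EuclideanSpace.single j 1) = if i = j then 2*(y j - x₀ j) else 0 := by
    intro i
    rw [ContinuousLinearMap.smul_apply, PiLp.proj_apply, EuclideanSpace.single_apply]
    rcases eq_or_ne i j with h|h
    · subst h; simp
    · simp [h]
  rw [Finset.sum_congr rfl (fun i _ => this i), Finset.sum_ite_eq' Finset.univ j (fun _ => 2*(y j - x₀ j))]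
  simp

theorem contDiff_Qf : ContDiff ℝ (2 : ℕ) (Qf x₀) := by
  rw [show Qf x₀ = fun z => ∑ i : Fin n, (z i - x₀ i)^2 from rfl]
  refine ContDiff.sum fun i _ => ?_
  have h1 : ContDiff ℝ (2 : ℕ) (fun z : EuclideanSpace ℝ (Fin n) => z i - x₀ i) :=
    ((EuclideanSpace.proj (𝕜 := ℝ) i).contDiff).sub contDiff_const
  exact h1.pow 2

theorem contDiffAt_rho {p : ℝ} {x : EuclideanSpace ℝ (Fin n)} (hx : x ≠ x₀) :
    ContDiffAt ℝ 2 (fun y => Qf x₀ y ^ p) x := by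
  have h1 : ContDiffAt ℝ 2 (fun u : ℝ => u ^ p) (Qf x₀ x) :=
    Real.contDiffAt_rpow_const_of_ne (ne_of_gt (Qf_pos x₀ hx))
  exact h1.comp x (contDiff_Qf x₀).contDiffAt

theorem hasFDerivAt_rho (p : ℝ) {y : EuclideanSpace ℝ (Fin n)} (hy : y ≠ x₀) :
    HasFDerivAt (fun z => Qf x₀ z ^ p) ((p * Qf x₀ y ^ (p-1)) • Df x₀ y) y := by
  have h1 : HasDerivAt (fun u : ℝ => u ^ p) (p * Qf x₀ y ^ (p-1)) (Qf x₀ y) :=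
    Real.hasDerivAt_rpow_const (Or.inl (ne_of_gt (Qf_pos x₀ hy)))
  exact h1.comp_hasFDerivAt y (hasFDerivAt_Qf x₀ y)

theorem lap_rho {p : ℝ} {x : EuclideanSpace ℝ (Fin n)} (hx : x ≠ x₀) :
    lap (fun y => Qf x₀ y ^ p) x = (2*p*(2*p + n - 2)) * Qf x₀ x ^ (p - 1) := by
  have hopen : IsOpen {y : EuclideanSpace ℝ (Fin n) | y ≠ x₀} := isOpen_ne
  have hxmem : x ∈ {y : EuclideanSpace ℝ (Fin n) | y ≠ x₀} := hx
  rw [lap]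
  have key : ∀ i : Fin n,
      fderiv ℝ (fun y => fderiv ℝ (fun z => Qf x₀ z ^ p) y (EuclideanSpace.single i 1)) x
        (EuclideanSpace.single i 1)
      = 2*p*((p-1) * Qf x₀ x ^ (p-2) * (2*(x i - x₀ i)) * (x i - x₀ i)
          + Qf x₀ x ^ (p-1)) := by
    intro i
    set e := EuclideanSpace.single i (1:ℝ) with he
    set gi : EuclideanSpace ℝ (Fin n) → ℝ :=
      fun y => (2*p) * (Qf x₀ y ^ (p-1) * (y i - x₀ i)) with hgi
    have hev : (fun y => fderiv ℝ (fun z => Qf x₀ z ^ p) y e) =ᶠ[nhds x] gi := by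
      filter_upwards [hopen.mem_nhds hxmem] with y hy
      rw [(hasFDerivAt_rho x₀ p hy).fderiv]
      rw [ContinuousLinearMap.smul_apply, Df_apply]
      simp [hgi]; ring
    rw [hev.fderiv_eq]
    -- derivative of gi at x
    have h_rpow : HasFDerivAt (fun y => Qf x₀ y ^ (p-1))
        (((p-1) * Qf x₀ x ^ (p-1-1)) • Df x₀ x) x := hasFDerivAt_rho x₀ (p-1) hx
    have h_lin : HasFDerivAt (fun y : EuclideanSpace ℝ (Fin n) => y i - x₀ i)
        (EuclideanSpace.proj (𝕜 := ℝ) i) x :=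
      ((EuclideanSpace.proj (𝕜 := ℝ) i).hasFDerivAt).sub_const _
    have h_mul : HasFDerivAt gi _ x := (h_rpow.mul h_lin).const_mul (2*p)
    rw [h_mul.fderiv]
    simp only [he, ContinuousLinearMap.smul_apply, ContinuousLinearMap.add_apply,
      PiLp.proj_apply, EuclideanSpace.single_apply, Df_apply, smul_eq_mul, if_pos rfl, if_true]
    have hpp : p - 1 - 1 = p - 2 := by ring
    rw [hpp]; ring
  rw [Finset.sum_congr rfl (fun i _ => key i)]
  have hsum : ∑ i : Fin n, (x i - x₀ i) * (x i - x₀ i) = Qf x₀ x := by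
    rw [Qf]; exact Finset.sum_congr rfl fun i _ => (sq ((x i - x₀ i))).symm
  have hQx : Qf x₀ x ^ (p-2) * Qf x₀ x = Qf x₀ x ^ (p-1) := by
    have h0 := Qf_pos x₀ hx
    rw [← Real.rpow_add_one (ne_of_gt h0)]
    congr 1; ring
  have expand : ∀ i : Fin n, 2*p*((p-1) * Qf x₀ x ^ (p-2) * (2*(x i - x₀ i)) * (x i - x₀ i)
      + Qf x₀ x ^ (p-1))
      = (2*p*(p-1)*Qf x₀ x ^ (p-2)*2) * ((x i - x₀ i) * (x i - x₀ i))
        + 2*p*Qf x₀ x ^ (p-1) := by intro i; ring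
  rw [Finset.sum_congr rfl (fun i _ => expand i), Finset.sum_add_distrib, ← Finset.mul_sum,
    hsum, Finset.sum_const, Finset.card_univ, Fintype.card_fin, nsmul_eq_mul]
  linear_combination (4*p*(p-1)) * hQx

end radial

theorem key_nonpos {n : ℕ}
    (hn : 3 ≤ n)
    (Ω : Set (EuclideanSpace ℝ (Fin n))) (hΩo : IsOpen Ω) (hΩb : Bornology.IsBounded Ω)
    (x₀ : EuclideanSpace ℝ (Fin n)) (c : EuclideanSpace ℝ (Fin n) → ℝ)
    (hc : ∀ x ∈ Ω, x ≠ x₀ → c x ≤ (((n : ℝ) - 2) / 2) ^ 2 / ‖x - x₀‖ ^ 2)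
    (ξ : EuclideanSpace ℝ (Fin n) → ℝ) (hξ : ContDiffOn ℝ 2 ξ (closure Ω))
    (heq : ∀ x ∈ Ω, lap ξ x + c x * ξ x = 0)
    (hbd : ∀ x ∈ frontier Ω, ξ x = 0) :
    ∀ x ∈ Ω, ξ x ≤ 0 := by
  intro a0 ha0
  by_contra hpos0
  push_neg at hpos0
  -- basic setup
  set α : ℝ := ((n : ℝ) - 2) / 2 with hαdef
  have hα : 0 < α := by
    have : (3:ℝ) ≤ (n:ℝ) := by exact_mod_cast hn
    rw [hαdef]; linarith
  set p : ℝ := -α/2 with hpdef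
  set ρ : EuclideanSpace ℝ (Fin n) → ℝ := fun y => Qf x₀ y ^ p with hρdef
  have hclcomp : IsCompact (closure Ω) := hΩb.isCompact_closure
  have hcont : ContinuousOn ξ (closure Ω) := hξ.continuousOn
  have hΩsub : Ω ⊆ closure Ω := subset_closure
  have hnhds : ∀ x ∈ Ω, closure Ω ∈ nhds x := fun x hx =>
    Filter.mem_of_superset (hΩo.mem_nhds hx) hΩsub
  -- bound on ξ
  obtain ⟨C0, hC0⟩ := hclcomp.exists_bound_of_continuousOn hcont
  set C : ℝ := max C0 1 with hCdef
  have hC : 0 < C := lt_of_lt_of_le one_pos (le_max_right _ _)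
  have hCb : ∀ y ∈ closure Ω, ξ y ≤ C := fun y hy =>
    le_trans (le_trans (le_abs_self _) (hC0 y hy)) (le_max_left _ _)
  -- bound on domain
  obtain ⟨R0, hR0⟩ := (hΩb.closure).subset_ball x₀
  set R : ℝ := max R0 1 with hRdef
  have hR : 0 < R := lt_of_lt_of_le one_pos (le_max_right _ _)
  have hRb : ∀ y ∈ closure Ω, ‖y - x₀‖ ≤ R := by
    intro y hy
    have := hR0 hy
    rw [Metric.mem_ball, dist_eq_norm] at this
    exact le_trans this.le (le_max_left _ _)
  set K : ℝ := 2 * R ^ (α : ℝ) with hKdef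
  have hK : 0 < K := by
    have := Real.rpow_pos_of_pos hR α
    rw [hKdef]; linarith
  set ψ : EuclideanSpace ℝ (Fin n) → ℝ := fun y => K * ρ y - 1 with hψdef
  -- ρ in terms of norm
  have hρ_eq : ∀ y : EuclideanSpace ℝ (Fin n), y ≠ x₀ →
      ρ y = (‖y - x₀‖ ^ (α : ℝ))⁻¹ := by
    intro y hy
    have hnorm : (0:ℝ) < ‖y - x₀‖ := norm_sub_pos_iff.mpr hy
    rw [hρdef]
    simp only
    rw [Qf_eq, ← Real.rpow_natCast (‖y - x₀‖) 2, ← Real.rpow_mul (norm_nonneg _),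
      ← Real.rpow_neg_one (‖y - x₀‖ ^ (α:ℝ)), ← Real.rpow_mul hnorm.le]
    congr 1
    rw [hpdef]; push_cast; ring
  have hρ_pos : ∀ y : EuclideanSpace ℝ (Fin n), y ≠ x₀ → 0 < ρ y := fun y hy =>
    Real.rpow_pos_of_pos (Qf_pos x₀ hy) p
  -- ψ ≥ 1 on closure Ω
  have hψ_ge : ∀ y ∈ closure Ω, y ≠ x₀ → 1 ≤ ψ y := by
    intro y hy hy0
    have hnorm : (0:ℝ) < ‖y - x₀‖ := norm_sub_pos_iff.mpr hy0
    have h1 : ‖y - x₀‖ ^ (α:ℝ) ≤ R ^ (α:ℝ) :=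
      Real.rpow_le_rpow (norm_nonneg _) (hRb y hy) hα.le
    have h2 : (0:ℝ) < ‖y - x₀‖ ^ (α:ℝ) := Real.rpow_pos_of_pos hnorm α
    have h3 : (2:ℝ) ≤ K * ρ y := by
      rw [hρ_eq y hy0, ← div_eq_mul_inv, le_div_iff₀ h2]
      calc 2 * ‖y - x₀‖ ^ (α:ℝ) ≤ 2 * R ^ (α:ℝ) := by linarith
        _ = K := rfl
    show (1:ℝ) ≤ K * ρ y - 1
    linarith
  have hψ_pos : ∀ y ∈ closure Ω, y ≠ x₀ → 0 < ψ y := fun y hy hy0 =>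
    lt_of_lt_of_le one_pos (hψ_ge y hy hy0)
  -- ψ smooth away from x₀
  have hψ_cd : ∀ {x : EuclideanSpace ℝ (Fin n)}, x ≠ x₀ → ContDiffAt ℝ 2 ψ x := by
    intro x hx
    exact (contDiffAt_const.mul (contDiffAt_rho x₀ hx)).sub contDiffAt_const
  -- Laplacian of ψ
  have hcoeff : 2*p*(2*p + (n:ℝ) - 2) = -α^2 := by rw [hpdef, hαdef]; push_cast; ring
  have hlapψ : ∀ {x : EuclideanSpace ℝ (Fin n)}, x ≠ x₀ →
      lap ψ x = K * (-α^2 * Qf x₀ x ^ (p - 1)) := by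
    intro x hx
    have h1 : lap ψ x = lap (fun y => K * ρ y) x := lap_sub_const _ x 1
    rw [h1, lap_const_mul K (contDiffAt_rho x₀ hx)]
    have h2 : lap ρ x = (2*p*(2*p + (n:ℝ) - 2)) * Qf x₀ x ^ (p - 1) := lap_rho x₀ hx
    rw [h2, hcoeff]
  -- find a point a ∈ Ω, a ≠ x₀, with ξ a > 0
  obtain ⟨a, haΩ, hax₀, haξ⟩ :
      ∃ a ∈ Ω, a ≠ x₀ ∧ 0 < ξ a := by
    rcases eq_or_ne a0 x₀ with h0 | h0
    · -- a0 = x₀ : perturb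
      have hca : ContinuousAt ξ a0 := hcont.continuousAt (hnhds a0 ha0)
      have hev : ∀ᶠ y in nhds a0, 0 < ξ y := hca.eventually (eventually_gt_nhds hpos0)
      have hev2 : ∀ᶠ y in nhds a0, y ∈ Ω ∧ 0 < ξ y :=
        Filter.Eventually.and (hΩo.mem_nhds ha0 : ∀ᶠ y in nhds a0, y ∈ Ω) hev
      obtain ⟨ε, hε, hball⟩ := Metric.eventually_nhds_iff.mp hev2
      have hn0 : 0 < n := by omega
      set a : EuclideanSpace ℝ (Fin n) := a0 + (ε/2) • EuclideanSpace.single ⟨0, hn0⟩ (1:ℝ)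
        with hadef
      have hdist : dist a a0 = ε/2 := by
        rw [hadef, dist_eq_norm, add_sub_cancel_left, norm_smul, EuclideanSpace.norm_single]
        simp [abs_of_pos hε, abs_of_pos (half_pos hε)]
      have hmem := hball (by rw [hdist]; linarith)
      refine ⟨a, hmem.1, ?_, hmem.2⟩
      rw [← h0]
      intro hcon
      rw [hadef] at hcon
      have : (ε/2) • EuclideanSpace.single (⟨0, hn0⟩ : Fin n) (1:ℝ) = 0 := by
        have := congrArg (fun z => z - a0) hcon
        simpa [add_sub_cancel_left] using this
      have h2 := congrArg (fun z : EuclideanSpace ℝ (Fin n) => z ⟨0, hn0⟩) this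
      simp only [PiLp.smul_apply, EuclideanSpace.single_apply, if_pos rfl, smul_eq_mul,
        mul_one, PiLp.zero_apply, if_true] at h2
      linarith
    · exact ⟨a0, ha0, h0, hpos0⟩
  have hacl : a ∈ closure Ω := hΩsub haΩ
  have hψa : 0 < ψ a := hψ_pos a hacl hax₀
  set wa : ℝ := ξ a / ψ a with hwadef
  have hwa : 0 < wa := div_pos haξ hψa
  -- choice of δ
  set B : ℝ := K / (1 + 2*C/wa) with hBdef
  have hdenom : 0 < 1 + 2*C/wa := by positivity
  have hB : 0 < B := div_pos hK hdenom
  set δ : ℝ := min ‖a - x₀‖ (B ^ (α⁻¹ : ℝ)) with hδdef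
  have hδpos : 0 < δ :=
    lt_min (norm_sub_pos_iff.mpr hax₀) (Real.rpow_pos_of_pos hB _)
  have hδa : δ ≤ ‖a - x₀‖ := min_le_left _ _
  have hδB : δ ^ (α : ℝ) ≤ B := by
    have h1 : δ ^ (α:ℝ) ≤ (B ^ (α⁻¹:ℝ)) ^ (α:ℝ) :=
      Real.rpow_le_rpow hδpos.le (min_le_right _ _) hα.le
    rwa [← Real.rpow_mul hB.le, inv_mul_cancel₀ hα.ne', Real.rpow_one] at h1
  -- smallness of the quotient near x₀
  have hKB : K / B = 1 + 2*C/wa := by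
    rw [hBdef, div_div_eq_mul_div, mul_comm, mul_div_assoc, div_self hK.ne', mul_one]
  have hsmall : ∀ y ∈ closure Ω, y ≠ x₀ → ‖y - x₀‖ ≤ δ → ξ y / ψ y ≤ wa/2 := by
    intro y hy hy0 hyδ
    have hnorm : (0:ℝ) < ‖y - x₀‖ := norm_sub_pos_iff.mpr hy0
    have ht : ‖y - x₀‖ ^ (α:ℝ) ≤ B :=
      le_trans (Real.rpow_le_rpow (norm_nonneg _) hyδ hα.le) hδB
    have htpos : (0:ℝ) < ‖y - x₀‖ ^ (α:ℝ) := Real.rpow_pos_of_pos hnorm _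
    have hKdiv : K / B ≤ K / ‖y - x₀‖ ^ (α:ℝ) :=
      div_le_div_of_nonneg_left hK.le htpos ht
    have hψy : 2*C/wa ≤ ψ y := by
      have : ψ y = K / ‖y - x₀‖ ^ (α:ℝ) - 1 := by
        show K * ρ y - 1 = _
        rw [hρ_eq y hy0, div_eq_mul_inv]
      rw [this]
      rw [hKB] at hKdiv
      linarith
    have hψypos : 0 < ψ y := hψ_pos y hy hy0
    have h2 : ξ y / ψ y ≤ C / ψ y :=
      (div_le_div_iff_of_pos_right hψypos).mpr (hCb y hy)
    have h3 : C / ψ y ≤ C / (2*C/wa) := by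
      apply div_le_div_of_nonneg_left hC.le (by positivity) hψy
    have h4 : C / (2*C/wa) = wa/2 := by
      field_simp
    linarith
  -- the compact region away from x₀
  set T : Set (EuclideanSpace ℝ (Fin n)) := closure Ω ∩ {y | δ ≤ ‖y - x₀‖} with hTdef
  have hTclosed : IsClosed {y : EuclideanSpace ℝ (Fin n) | δ ≤ ‖y - x₀‖} := by
    have hcontnorm : Continuous (fun y : EuclideanSpace ℝ (Fin n) => ‖y - x₀‖) :=
      (continuous_id.sub continuous_const).norm
    exact isClosed_le continuous_const hcontnorm
  have hT : IsCompact T := hclcomp.inter_right hTclosed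
  have haT : a ∈ T := ⟨hacl, hδa⟩
  have hTx₀ : ∀ y ∈ T, y ≠ x₀ := by
    intro y hy h
    have := hy.2
    rw [h] at this
    simp at this
    linarith
  have hwcont : ContinuousOn (fun y => ξ y / ψ y) T := by
    apply ContinuousOn.div (hcont.mono inter_subset_left)
    · intro y hy
      exact ((hψ_cd (hTx₀ y hy)).continuousAt).continuousWithinAt
    · intro y hy
      exact (hψ_pos y hy.1 (hTx₀ y hy)).ne'
  obtain ⟨q, hqT, hqmax'⟩ := hT.exists_isMaxOn ⟨a, haT⟩ hwcont
  have hqmax : ∀ y ∈ T, ξ y / ψ y ≤ ξ q / ψ q := fun y hy => hqmax' hy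
  set M : ℝ := ξ q / ψ q with hMdef
  have hwaM : wa ≤ M := hqmax a haT
  have hM : 0 < M := lt_of_lt_of_le hwa hwaM
  have hq_ne : q ≠ x₀ := hTx₀ q hqT
  have hqcl : q ∈ closure Ω := hqT.1
  have hψq : 0 < ψ q := hψ_pos q hqcl hq_ne
  -- global bound ξ ≤ M ψ
  have hMall : ∀ y ∈ closure Ω, y ≠ x₀ → ξ y ≤ M * ψ y := by
    intro y hy hy0
    have hψy : 0 < ψ y := hψ_pos y hy hy0
    rcases le_or_gt δ ‖y - x₀‖ with hδy | hδy
    · exact (div_le_iff₀ hψy).mp (hqmax y ⟨hy, hδy⟩)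
    · have := hsmall y hy hy0 hδy.le
      have h2 : ξ y / ψ y ≤ M := by linarith
      exact (div_le_iff₀ hψy).mp h2
  -- q is an interior point
  have hqΩ : q ∈ Ω := by
    by_contra hq
    have hfr : q ∈ frontier Ω := by
      rw [hΩo.frontier_eq]
      exact ⟨hqcl, hq⟩
    have : ξ q = 0 := hbd q hfr
    rw [hMdef, this] at hM
    simp at hM
  have hξq : ξ q = M * ψ q := by
    rw [hMdef, div_mul_cancel₀ _ hψq.ne']
  -- the comparison function g has a local max at q
  set g : EuclideanSpace ℝ (Fin n) → ℝ := fun y => ξ y - M * ψ y with hgdef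
  have hlmax : IsLocalMax g q := by
    have hopen : IsOpen (Ω ∩ {y : EuclideanSpace ℝ (Fin n) | y ≠ x₀}) :=
      hΩo.inter isOpen_ne
    have hmem : Ω ∩ {y : EuclideanSpace ℝ (Fin n) | y ≠ x₀} ∈ nhds q :=
      hopen.mem_nhds ⟨hqΩ, hq_ne⟩
    filter_upwards [hmem] with y hy
    show g y ≤ g q
    rw [hgdef]
    simp only
    have := hMall y (hΩsub hy.1) hy.2
    rw [← hξq]
    linarith [hξq]
  have hgcd : ContDiffAt ℝ 2 g q :=
    (hξ.contDiffAt (hnhds q hqΩ)).sub (contDiffAt_const.mul (hψ_cd hq_ne))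
  have hlap_le : lap g q ≤ 0 := lap_nonpos_of_isLocalMax hgcd hlmax
  -- compute lap g q and derive a contradiction
  have hlapg : lap g q = lap ξ q - M * lap ψ q := by
    have h1 : lap g q = lap ξ q - lap (fun y => M * ψ y) q :=
      lap_sub (hξ.contDiffAt (hnhds q hqΩ)) (contDiffAt_const.mul (hψ_cd hq_ne))
    rw [h1, lap_const_mul M (hψ_cd hq_ne)]
  have hQq : 0 < Qf x₀ q := Qf_pos x₀ hq_ne
  have hlapξ : lap ξ q = -(c q * ξ q) := by linarith [heq q hqΩ]
  have hlψ := hlapψ hq_ne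
  have hrpow : Qf x₀ q ^ (p - 1) = Qf x₀ q ^ p / Qf x₀ q :=
    Real.rpow_sub_one hQq.ne' p
  have hcq : c q ≤ α^2 / Qf x₀ q := by
    have := hc q hqΩ hq_ne
    rwa [Qf_eq]
  have hξqpos : 0 < ξ q := by
    rw [hξq]; exact mul_pos hM hψq
  set A : ℝ := Qf x₀ q ^ p with hAdef
  have hA : 0 < A := Real.rpow_pos_of_pos hQq p
  have h1 : lap g q = -(c q * ξ q) + M * K * α^2 * (A / Qf x₀ q) := by
    rw [hlapg, hlapξ, hlψ, hrpow]
    ring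
  have h2 : c q * ξ q ≤ α^2 / Qf x₀ q * ξ q :=
    mul_le_mul_of_nonneg_right hcq hξqpos.le
  have hkey : M * K * α^2 * (A / Qf x₀ q) ≤ α^2 / Qf x₀ q * ξ q := by
    linarith
  have hkey2 : M * K * α^2 * A ≤ α^2 * ξ q := by
    have h5 : M * K * α^2 * (A / Qf x₀ q) * Qf x₀ q ≤ α^2 / Qf x₀ q * ξ q * Qf x₀ q :=
      mul_le_mul_of_nonneg_right hkey hQq.le
    have e1 : M*K*α^2*(A/Qf x₀ q)*Qf x₀ q = M*K*α^2*A := by field_simp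
    have e2 : α^2 / Qf x₀ q * ξ q * Qf x₀ q = α^2 * ξ q := by field_simp
    linarith [h5, e1, e2]
  have hψq_eq : ψ q = K * A - 1 := by simp only [hψdef, hρdef, hAdef]
  have e3 : α^2 * ξ q = M*K*α^2*A - α^2*M := by rw [hξq, hψq_eq]; ring
  have hfinal : α^2 * M ≤ 0 := by linarith [hkey2, e3]
  have : 0 < α^2 * M := by positivity
  linarith


/-- Non-degeneracy of the linearised Dirichlet problem: for `n ≥ 3` and a potential
`c` with `c(x) ≤ ((n-2)/2)²/‖x-x₀‖²`, the only solution of `Δξ + cξ = 0` on a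
bounded open set `Ω` with `ξ = 0` on `∂Ω` is `ξ ≡ 0`. -/
theorem linearised_dirichlet_nondegenerate
    {n : ℕ} (hn : 3 ≤ n)
    (Ω : Set (EuclideanSpace ℝ (Fin n))) (hΩo : IsOpen Ω) (hΩb : Bornology.IsBounded Ω)
    (x₀ : EuclideanSpace ℝ (Fin n)) (c : EuclideanSpace ℝ (Fin n) → ℝ)
    (hc : ∀ x ∈ Ω, x ≠ x₀ → c x ≤ (((n : ℝ) - 2) / 2) ^ 2 / ‖x - x₀‖ ^ 2)
    (ξ : EuclideanSpace ℝ (Fin n) → ℝ) (hξ : ContDiffOn ℝ 2 ξ (closure Ω))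
    (heq : ∀ x ∈ Ω, lap ξ x + c x * ξ x = 0)
    (hbd : ∀ x ∈ frontier Ω, ξ x = 0) :
    ∀ x ∈ Ω, ξ x = 0 := by
  intro x hx
  have h1 := key_nonpos hn Ω hΩo hΩb x₀ c hc ξ hξ heq hbd x hx
  have heq' : ∀ y ∈ Ω, lap (fun z => -ξ z) y + c y * (-ξ y) = 0 := by
    intro y hy
    rw [lap_neg]
    linarith [heq y hy]
  have hbd' : ∀ y ∈ frontier Ω, -ξ y = 0 := by
    intro y hy
    rw [hbd y hy, neg_zero]
  have h2 := key_nonpos hn Ω hΩo hΩb x₀ c hc (fun z => -ξ z) hξ.neg heq' hbd' x hx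
  linarith
end

section
/- Let n ≥ 3 and let V : ℝ × (0,∞) → ℝ be a C² compactly supported radial potential, supported in {(u,r) : r ≤ R}, satisfying ∂²V/∂u²(u,r) ≤ 1/(4r²) for all (u,r). Fix A ∈ ℝ, and let u₁, u₂ : (0,∞) → ℝ be solutions of u''(r) + ((n−1)/r)·u'(r) + ∂V/∂u(u(r),r) = 0 such that u₁(r) = α₁/r^{n−2} + A and u₂(r) = α₂/r^{n−2} + A for all r ≥ R, where α₁ < α₂. Then u₁(r) < u₂(r) for every r > 0; that is, the family N_A of such solutions is totally ordered and their graphs are pairwise disjoint. -/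
open Set

set_option maxHeartbeats 1000000

/-- Theorem 3 (ordering of the family `N_A`): for `n ≥ 3` and a compactly supported
radial `C²` potential `V(u,r)` supported in `{r ≤ R}` with `∂²V/∂u²(u,r) ≤ 1/(4r²)`,
two radial solutions that equal `α₁/r^{n-2} + A` and `α₂/r^{n-2} + A` outside the
support, with `α₁ < α₂`, satisfy `u₁(r) < u₂(r)` for all `r > 0`. -/
theorem radial_solutions_ordered
    {n : ℕ} (hn : 3 ≤ n) (R : ℝ)
    (V : ℝ × ℝ → ℝ) (hV : ContDiff ℝ 2 V) (hVc : HasCompactSupport V)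
    (hVs : Function.support V ⊆ {p : ℝ × ℝ | p.2 ≤ R})
    (hVdd : ∀ (u r : ℝ), 0 < r →
      deriv (fun v => deriv (fun w => V (w, r)) v) u ≤ 1 / (4 * r ^ 2))
    (A α₁ α₂ : ℝ) (hα : α₁ < α₂)
    (u₁ u₂ : ℝ → ℝ)
    (hu₁ : ContDiffOn ℝ 2 u₁ (Ioi 0)) (hu₂ : ContDiffOn ℝ 2 u₂ (Ioi 0))
    (heq₁ : ∀ r ∈ Ioi (0 : ℝ),
      deriv (deriv u₁) r + ((n : ℝ) - 1) / r * deriv u₁ r +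
        deriv (fun v => V (v, r)) (u₁ r) = 0)
    (heq₂ : ∀ r ∈ Ioi (0 : ℝ),
      deriv (deriv u₂) r + ((n : ℝ) - 1) / r * deriv u₂ r +
        deriv (fun v => V (v, r)) (u₂ r) = 0)
    (hout₁ : ∀ r : ℝ, R ≤ r → u₁ r = α₁ / r ^ (n - 2) + A)
    (hout₂ : ∀ r : ℝ, R ≤ r → u₂ r = α₂ / r ^ (n - 2) + A) :
    ∀ r ∈ Ioi (0 : ℝ), u₁ r < u₂ r := by
  -- basic constants
  have hn3 : (3:ℝ) ≤ (n:ℝ) := by exact_mod_cast hn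
  set m : ℝ := ((n:ℝ) - 2) / 2 with hm_def
  have hm : (1:ℝ)/2 ≤ m := by rw [hm_def]; linarith
  have hm0 : 0 < m := by linarith
  have h2m : (n:ℝ) - 1 = 2 * m + 1 := by rw [hm_def]; ring
  set c : ℝ := α₂ - α₁ with hc_def
  have hc : 0 < c := by simp [hc_def]; linarith
  set w : ℝ → ℝ := fun r => u₂ r - u₁ r with hw_def
  -- differentiability facts
  have hwC2 : ContDiffOn ℝ 2 w (Ioi 0) := hu₂.sub hu₁
  have hd : ∀ (u : ℝ → ℝ), ContDiffOn ℝ 2 u (Ioi 0) → ∀ r ∈ Ioi (0:ℝ),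
      DifferentiableAt ℝ u r ∧ DifferentiableAt ℝ (deriv u) r := by
    intro u hu r hr
    refine ⟨(hu.differentiableOn (by norm_num)).differentiableAt (Ioi_mem_nhds hr), ?_⟩
    exact (((hu.deriv_of_isOpen (m := 1) isOpen_Ioi (by norm_num)).differentiableOn
      one_ne_zero).differentiableAt (Ioi_mem_nhds hr))
  have hd₁ := fun r hr => (hd u₁ hu₁ r hr).1
  have hd₂ := fun r hr => (hd u₂ hu₂ r hr).1
  have hdd₁ := fun r hr => (hd u₁ hu₁ r hr).2
  have hdd₂ := fun r hr => (hd u₂ hu₂ r hr).2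
  have hw_deriv : ∀ r ∈ Ioi (0:ℝ), deriv w r = deriv u₂ r - deriv u₁ r := by
    intro r hr; exact deriv_sub (hd₂ r hr) (hd₁ r hr)
  have hw_has : ∀ r ∈ Ioi (0:ℝ), HasDerivAt w (deriv w r) r := by
    intro r hr
    exact (((hd₂ r hr).sub (hd₁ r hr)) : DifferentiableAt ℝ w r).hasDerivAt
  have hw_ev : ∀ r ∈ Ioi (0:ℝ),
      deriv w =ᶠ[nhds r] fun x => deriv u₂ x - deriv u₁ x := by
    intro r hr
    filter_upwards [Ioi_mem_nhds hr] with x hx using hw_deriv x hx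
  have hw'' : ∀ r ∈ Ioi (0:ℝ),
      deriv (deriv w) r = deriv (deriv u₂) r - deriv (deriv u₁) r := by
    intro r hr
    rw [(hw_ev r hr).deriv_eq]
    exact deriv_sub (hdd₂ r hr) (hdd₁ r hr)
  have hw'_has : ∀ r ∈ Ioi (0:ℝ), HasDerivAt (deriv w) (deriv (deriv w) r) r := by
    intro r hr
    have hdiff : DifferentiableAt ℝ (fun x => deriv u₂ x - deriv u₁ x) r :=
      (hdd₂ r hr).sub (hdd₁ r hr)
    exact (((hw_ev r hr).differentiableAt_iff).mpr hdiff).hasDerivAt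
  -- the ODE for w
  have hODE : ∀ r ∈ Ioi (0:ℝ),
      deriv (deriv w) r = -(((n:ℝ) - 1) / r) * deriv w r +
        (deriv (fun v => V (v, r)) (u₁ r) - deriv (fun v => V (v, r)) (u₂ r)) := by
    intro r hr
    have h1 := heq₁ r hr
    have h2 := heq₂ r hr
    rw [hw'' r hr, hw_deriv r hr]
    ring_nf
    ring_nf at h1 h2
    linarith
  -- the key potential inequality from hVdd
  have hVu : ∀ r : ℝ, 0 < r → ∀ x y : ℝ, x ≤ y →
      deriv (fun v => V (v, r)) y - deriv (fun v => V (v, r)) x ≤ (y - x) / (4 * r ^ 2) := by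
    intro r hr x y hxy
    have hg : ContDiff ℝ 2 (fun v => V (v, r)) := hV.comp (contDiff_id.prodMk contDiff_const)
    have h12 : ((1 : WithTop ℕ∞) + 1) = 2 := by norm_num
    rw [← h12] at hg
    have hdg : Differentiable ℝ (deriv (fun v => V (v, r))) :=
      (contDiff_succ_iff_deriv.mp hg).2.2.differentiable one_ne_zero
    set F : ℝ → ℝ := fun x => x / (4 * r ^ 2) - deriv (fun v => V (v, r)) x with hF_def
    have hF : ∀ x : ℝ, HasDerivAt F
        (1 / (4 * r ^ 2) - deriv (deriv (fun v => V (v, r))) x) x := by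
      intro x
      exact ((hasDerivAt_id x).div_const _).sub (hdg x).hasDerivAt
    have hmono : Monotone F := by
      apply monotone_of_deriv_nonneg
      · exact fun x => (hF x).differentiableAt
      · intro x
        rw [(hF x).deriv]
        have := hVdd x r hr
        simp only [sub_nonneg]
        exact this
    have := hmono hxy
    simp only [hF_def] at this
    have h3 : (y - x) / (4 * r ^ 2) = y / (4 * r ^ 2) - x / (4 * r ^ 2) := sub_div y x _
    linarith
  -- positivity of w outside the support
  have hw_out : ∀ r : ℝ, R ≤ r → w r = c / r ^ (n - 2) := by
    intro r hR
    simp only [hw_def, hout₁ r hR, hout₂ r hR, hc_def]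
    ring
  have hwpos_out : ∀ r : ℝ, R ≤ r → 0 < r → 0 < w r := by
    intro r hR hr
    rw [hw_out r hR]
    exact div_pos hc (pow_pos hr _)
  -- suppose not
  by_contra hcon
  push_neg at hcon
  obtain ⟨r₀, hr₀, hle⟩ := hcon
  have hwr₀ : w r₀ ≤ 0 := by simp [hw_def]; linarith
  have hr₀R : r₀ < R := by
    by_contra h
    push_neg at h
    exact absurd (hwpos_out r₀ h hr₀) (by linarith)
  -- the last zero r₁
  set S : Set ℝ := {r ∈ Icc r₀ R | w r ≤ 0} with hS_def
  have hScc : ContinuousOn w (Icc r₀ R) :=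
    hwC2.continuousOn.mono (fun x hx => lt_of_lt_of_le hr₀ hx.1)
  have hS_closed : IsClosed S :=
    hScc.preimage_isClosed_of_isClosed isClosed_Icc isClosed_Iic
  have hS_cpt : IsCompact S :=
    isCompact_Icc.of_isClosed_subset hS_closed (fun x hx => hx.1)
  have hS_ne : S.Nonempty := ⟨r₀, ⟨le_refl _, hr₀R.le⟩, hwr₀⟩
  set r₁ : ℝ := sSup S with hr₁_def
  have hr₁S : r₁ ∈ S := hS_cpt.sSup_mem hS_ne
  have hr₁0 : 0 < r₁ := lt_of_lt_of_le hr₀ hr₁S.1.1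
  have hr₁ub : ∀ x ∈ S, x ≤ r₁ := fun x hx => le_csSup hS_cpt.bddAbove hx
  have hgt : ∀ r : ℝ, r₁ < r → 0 < w r := by
    intro r hr
    have hr0 : 0 < r := lt_trans hr₁0 hr
    by_cases hR : R ≤ r
    · exact hwpos_out r hR hr0
    · push_neg at hR
      by_contra h
      push_neg at h
      have : r ∈ S := ⟨⟨le_trans hr₁S.1.1 hr.le, hR.le⟩, h⟩
      exact absurd (hr₁ub r this) (not_le.mpr hr)
  have hw_r₁ : w r₁ = 0 := by
    refine le_antisymm hr₁S.2 ?_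
    have hcont : ContinuousAt w r₁ :=
      hwC2.continuousOn.continuousAt (Ioi_mem_nhds hr₁0)
    have htd : Filter.Tendsto w (nhdsWithin r₁ (Ioi r₁)) (nhds (w r₁)) :=
      hcont.continuousWithinAt.tendsto
    exact ge_of_tendsto htd (eventually_nhdsWithin_of_forall fun x hx => (hgt x hx).le)
  have hwnn : ∀ r : ℝ, r₁ ≤ r → 0 ≤ w r := by
    intro r hr
    rcases eq_or_lt_of_le hr with h | h
    · rw [← h, hw_r₁]
    · exact (hgt r h).le
  -- v and G
  set v : ℝ → ℝ := fun r => r ^ m * w r with hv_def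
  set G : ℝ → ℝ := fun r => m * r ^ m * w r + r ^ (m + 1) * deriv w r with hG_def
  have hv_has : ∀ r ∈ Ioi (0:ℝ),
      HasDerivAt v (m * r ^ (m - 1) * w r + r ^ m * deriv w r) r := by
    intro r hr
    exact (Real.hasDerivAt_rpow_const (Or.inl (ne_of_gt hr))).mul (hw_has r hr)
  have hvG : ∀ r ∈ Ioi (0:ℝ), HasDerivAt v (G r / r) r := by
    intro r hr
    have h1 : r ^ m = r ^ (m - 1) * r := by
      rw [← Real.rpow_add_one (ne_of_gt hr)]; norm_num
    have h2 : r ^ (m + 1) = r ^ m * r := Real.rpow_add_one (ne_of_gt hr) m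
    have hGr : G r = r * (m * r ^ (m - 1) * w r + r ^ m * deriv w r) := by
      simp only [hG_def]
      rw [h2, h1]
      ring
    rw [hGr, mul_div_cancel_left₀ _ (ne_of_gt hr)]
    exact hv_has r hr
  have hG_has : ∀ r ∈ Ioi (0:ℝ),
      HasDerivAt G (m * (m * r ^ (m - 1)) * w r + m * r ^ m * deriv w r +
        ((m + 1) * r ^ m * deriv w r + r ^ (m + 1) * deriv (deriv w) r)) r := by
    intro r hr
    have t1 : HasDerivAt (fun x : ℝ => m * x ^ m * w x)
        (m * (m * r ^ (m - 1)) * w r + m * r ^ m * deriv w r) r := by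
      have hpow : HasDerivAt (fun y : ℝ => y ^ m) (m * r ^ (m - 1)) r :=
        Real.hasDerivAt_rpow_const (Or.inl (ne_of_gt hr))
      exact (hpow.const_mul m).mul (hw_has r hr)
    have t2 : HasDerivAt (fun x : ℝ => x ^ (m + 1) * deriv w x)
        ((m + 1) * r ^ m * deriv w r + r ^ (m + 1) * deriv (deriv w) r) r := by
      have hpow : HasDerivAt (fun y : ℝ => y ^ (m + 1)) ((m + 1) * r ^ (m + 1 - 1)) r :=
        Real.hasDerivAt_rpow_const (Or.inl (ne_of_gt hr))
      have hm1 : m + 1 - 1 = m := by ring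
      rw [hm1] at hpow
      exact hpow.mul (hw'_has r hr)
    exact t1.add t2
  -- G' ≥ 0 on Ioi r₁
  have hG'_nonneg : ∀ r : ℝ, r₁ < r →
      0 ≤ m * (m * r ^ (m - 1)) * w r + m * r ^ m * deriv w r +
        ((m + 1) * r ^ m * deriv w r + r ^ (m + 1) * deriv (deriv w) r) := by
    intro r hrr
    have hr : 0 < r := lt_trans hr₁0 hrr
    have hrm : r ∈ Ioi (0:ℝ) := hr
    have hW : 0 ≤ w r := hwnn r hrr.le
    have hD : -(w r / (4 * r ^ 2)) ≤
        deriv (fun v => V (v, r)) (u₁ r) - deriv (fun v => V (v, r)) (u₂ r) := by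
      have h := hVu r hr (u₁ r) (u₂ r) (by simp only [hw_def] at hW; linarith)
      have : u₂ r - u₁ r = w r := by simp [hw_def]
      rw [this] at h
      linarith
    set D : ℝ := deriv (fun v => V (v, r)) (u₁ r) - deriv (fun v => V (v, r)) (u₂ r) with hD_def
    have h1 : r ^ m = r ^ (m - 1) * r := by
      rw [← Real.rpow_add_one (ne_of_gt hr)]; norm_num
    have h2 : r ^ (m + 1) = r ^ (m - 1) * r * r := by
      rw [Real.rpow_add_one (ne_of_gt hr) m, h1]
    set P : ℝ := r ^ (m - 1) with hP_def
    have hP : 0 < P := Real.rpow_pos_of_pos hr _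
    rw [hODE r hrm, h2m, h1, h2, ← hD_def]
    have key : m * (m * P) * w r + m * (P * r) * deriv w r +
        ((m + 1) * (P * r) * deriv w r +
          P * r * r * (-((2 * m + 1) / r) * deriv w r + D)) =
        m ^ 2 * P * w r + P * r ^ 2 * D := by
      field_simp
      ring
    rw [key]
    have hDP : P * r ^ 2 * (-(w r / (4 * r ^ 2))) ≤ P * r ^ 2 * D :=
      mul_le_mul_of_nonneg_left hD (by positivity)
    have heq : P * r ^ 2 * (-(w r / (4 * r ^ 2))) = -(P * w r) / 4 := by
      field_simp
    rw [heq] at hDP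
    have hm2 : (0:ℝ) ≤ m ^ 2 - 1/4 := by nlinarith [sq_nonneg (m - 1/2)]
    have hfin := mul_nonneg hm2 (mul_nonneg hP.le hW)
    have hfin2 : 0 ≤ m ^ 2 * P * w r - P * w r / 4 := by
      have hexp : (m ^ 2 - 1/4) * (P * w r) = m ^ 2 * P * w r - P * w r / 4 := by ring
      linarith [hexp ▸ hfin]
    have hsum := add_le_add hfin2 hDP
    calc (0:ℝ) = 0 + -(P * w r) / 4 + P * w r / 4 := by ring
    _ ≤ (m ^ 2 * P * w r - P * w r / 4) + (P * r ^ 2 * D) + P * w r / 4 := by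
        exact add_le_add hsum le_rfl
    _ = m ^ 2 * P * w r + P * r ^ 2 * D := by ring
  -- G is monotone on Ici r₁
  have hIci : Ici r₁ ⊆ Ioi (0:ℝ) := fun x hx => lt_of_lt_of_le hr₁0 hx
  have hGmono : MonotoneOn G (Ici r₁) := by
    apply monotoneOn_of_deriv_nonneg (convex_Ici r₁)
    · intro x hx
      exact (hG_has x (hIci hx)).continuousAt.continuousWithinAt
    · intro x hx
      rw [interior_Ici] at hx
      exact (hG_has x (hIci (Ioi_subset_Ici_self hx))).differentiableAt.differentiableWithinAt
    · intro x hx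
      rw [interior_Ici] at hx
      rw [(hG_has x (hIci (Ioi_subset_Ici_self hx))).deriv]
      exact hG'_nonneg x hx
  -- mean value theorem to get a point with positive derivative of v
  have hcontv : ContinuousOn v (Icc r₁ (r₁ + 1)) := by
    intro x hx
    exact (hvG x (lt_of_lt_of_le hr₁0 hx.1)).continuousAt.continuousWithinAt
  obtain ⟨s, hs, hslope⟩ := exists_hasDerivAt_eq_slope v (fun x => G x / x)
    (by linarith : r₁ < r₁ + 1) hcontv
    (fun x hx => hvG x (lt_trans hr₁0 hx.1))
  have hs0 : 0 < s := lt_trans hr₁0 hs.1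
  have hvr₁ : v r₁ = 0 := by simp [hv_def, hw_r₁]
  have hvb : 0 < v (r₁ + 1) := by
    simp only [hv_def]
    exact mul_pos (Real.rpow_pos_of_pos (by linarith) m) (hgt _ (by linarith))
  have hGs : 0 < G s := by
    have h0 : 0 < G s / s := by
      rw [hslope, hvr₁]
      simp only [sub_zero, add_sub_cancel_left, div_one]
      exact hvb
    have := mul_pos h0 hs0
    rwa [div_mul_cancel₀ _ (ne_of_gt hs0)] at this
  -- v strictly monotone on Ici s
  have hIcis : Ici s ⊆ Ioi (0:ℝ) := fun x hx => lt_of_lt_of_le hs0 hx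
  have hvmono : StrictMonoOn v (Ici s) := by
    apply strictMonoOn_of_deriv_pos (convex_Ici s)
    · intro x hx
      exact (hvG x (hIcis hx)).continuousAt.continuousWithinAt
    · intro x hx
      rw [interior_Ici] at hx
      have hx0 : 0 < x := lt_trans hs0 hx
      rw [(hvG x hx0).deriv]
      refine div_pos (lt_of_lt_of_le hGs ?_) hx0
      exact hGmono (le_of_lt hs.1) (le_trans (le_of_lt hs.1) (le_of_lt hx)) (le_of_lt hx)
  -- but v is strictly decreasing far out: contradiction
  have hv_out : ∀ x : ℝ, R ≤ x → 0 < x → v x = c * x ^ (-m) := by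
    intro x hR hx
    have hnat : (x:ℝ) ^ (n - 2) = x ^ ((n:ℝ) - 2) := by
      rw [← Real.rpow_natCast x (n - 2)]
      congr 1
      rw [Nat.cast_sub (by omega : 2 ≤ n)]
      norm_num
    simp only [hv_def, hw_out x hR, hnat]
    rw [div_eq_mul_inv, ← Real.rpow_neg hx.le, mul_comm c _, ← mul_assoc,
      ← Real.rpow_add hx]
    rw [mul_comm]
    congr 1
    rw [hm_def]
    push_cast
    ring
  set a : ℝ := max s R + 1 with ha_def
  have hsa : s < a := lt_of_le_of_lt (le_max_left s R) (lt_add_one _)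
  have hRa : R ≤ a := le_trans (le_max_right s R) (by linarith [le_max_right s R])
  have ha0 : 0 < a := lt_trans hs0 hsa
  have hab : a < a + 1 := lt_add_one a
  have hmono := hvmono (le_of_lt hsa) (le_of_lt (lt_trans hsa hab)) hab
  rw [hv_out a hRa ha0, hv_out (a + 1) (by linarith) (by linarith)] at hmono
  have hanti : (a + 1 : ℝ) ^ (-m) < a ^ (-m) :=
    Real.rpow_lt_rpow_of_neg ha0 hab (by linarith)
  nlinarith
end

section
/- Let n ≥ 3 be an integer and let c : (0,∞) → ℝ be a continuous function satisfying c(r) ≤ ((n−2)/2)²/r² for all r > 0. If ξ : (0,∞) → ℝ is a C² solution of ξ''(r) + ((n−1)/r)·ξ'(r) + c(r)·ξ(r) = 0 and ξ(r₁) = ξ(r₂) = 0 for some 0 < r₁ < r₂, then ξ is identically zero. -/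
open Set

set_option maxHeartbeats 2000000 in
/-- Absence of conjugate points for the radial Jacobi equation in dimension `n ≥ 3`:
if `c(r) ≤ ((n-2)/2)²/r²` and `ξ` solves `ξ'' + ((n-1)/r)ξ' + c(r)ξ = 0` on `(0,∞)`
with `ξ(r₁) = ξ(r₂) = 0` for some `0 < r₁ < r₂`, then `ξ ≡ 0` on `(0,∞)`. -/
theorem radial_jacobi_no_conjugate_points
    {n : ℕ} (hn : 3 ≤ n)
    (c : ℝ → ℝ) (hc : ContinuousOn c (Ioi 0))
    (hcb : ∀ r : ℝ, 0 < r → c r ≤ (((n : ℝ) - 2) / 2) ^ 2 / r ^ 2)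
    (ξ : ℝ → ℝ) (hξ : ContDiffOn ℝ 2 ξ (Ioi 0))
    (heq : ∀ r ∈ Ioi (0 : ℝ),
      deriv (deriv ξ) r + ((n : ℝ) - 1) / r * deriv ξ r + c r * ξ r = 0)
    (r₁ r₂ : ℝ) (hr₁ : 0 < r₁) (hr : r₁ < r₂)
    (hz₁ : ξ r₁ = 0) (hz₂ : ξ r₂ = 0) :
    ∀ r ∈ Ioi (0 : ℝ), ξ r = 0 := by
  have hn3 : (3 : ℝ) ≤ (n : ℝ) := by exact_mod_cast hn
  set β : ℝ := ((n : ℝ) - 2) / 2 with hβ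
  -- basic regularity
  have hd1 : ∀ r ∈ Ioi (0:ℝ), HasDerivAt ξ (deriv ξ r) r := by
    intro r hrr
    exact ((hξ.differentiableOn (by norm_num)).differentiableAt
      (isOpen_Ioi.mem_nhds hrr)).hasDerivAt
  have hdξ : ContDiffOn ℝ 1 (deriv ξ) (Ioi 0) :=
    hξ.deriv_of_isOpen isOpen_Ioi (by norm_num)
  have hd2 : ∀ r ∈ Ioi (0:ℝ), HasDerivAt (deriv ξ) (deriv (deriv ξ) r) r := by
    intro r hrr
    exact ((hdξ.differentiableOn (by norm_num)).differentiableAt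
      (isOpen_Ioi.mem_nhds hrr)).hasDerivAt
  ------------------------------------------------------------------
  -- Part 1: ξ vanishes on Icc r₁ r₂
  ------------------------------------------------------------------
  set u : ℝ → ℝ := fun r => r ^ β * ξ r with hu_def
  set u1 : ℝ → ℝ := fun r => β * r ^ (β-1) * ξ r + r ^ β * deriv ξ r with hu1_def
  set g : ℝ → ℝ := fun r => β * r ^ β * ξ r + r ^ (β+1) * deriv ξ r with hg_def
  set Q : ℝ → ℝ := fun r => β^2 / r - r * c r with hQ_def
  set F : ℝ → ℝ := fun r => g r * u r with hF_def
  have hu : ∀ r ∈ Ioi (0:ℝ), HasDerivAt u (u1 r) r := by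
    intro r hrr
    have h1 : HasDerivAt (fun x : ℝ => x ^ β) (β * r ^ (β-1)) r :=
      Real.hasDerivAt_rpow_const (Or.inl (ne_of_gt hrr))
    have := h1.fun_mul (hd1 r hrr)
    simp only [hu1_def]
    convert this using 1
    all_goals ring
  have hgu : ∀ r ∈ Ioi (0:ℝ), g r = r * u1 r := by
    intro r hrr
    have h1 : r ^ (β-1) * r = r ^ β := by
      rw [← Real.rpow_add_one (ne_of_gt hrr)]; ring_nf
    have h2 : r ^ (β+1) = r ^ β * r := Real.rpow_add_one (ne_of_gt hrr) β
    simp only [hg_def, hu1_def]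
    rw [h2, ← h1]; ring
  have hQ0 : ∀ r ∈ Ioi (0:ℝ), 0 ≤ Q r := by
    intro r hrr
    have h := hcb r hrr
    have h2 : r * c r ≤ r * (β ^ 2 / r ^ 2) :=
      mul_le_mul_of_nonneg_left h hrr.le
    have h3 : r * (β ^ 2 / r ^ 2) = β ^ 2 / r := by
      field_simp [ne_of_gt (show (0:ℝ) < r from hrr)]
    simp only [hQ_def]
    rw [h3] at h2
    linarith
  have hg' : ∀ r ∈ Ioi (0:ℝ), HasDerivAt g (Q r * u r) r := by
    intro r hrr
    have hrne := ne_of_gt (show (0:ℝ) < r from hrr)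
    have h1 : HasDerivAt (fun x : ℝ => β * x ^ β) (β * (β * r ^ (β-1))) r :=
      (Real.hasDerivAt_rpow_const (Or.inl hrne)).const_mul β
    have h2 : HasDerivAt (fun x : ℝ => x ^ (β+1)) ((β+1) * r ^ β) r := by
      have := Real.hasDerivAt_rpow_const (x := r) (p := β+1) (Or.inl hrne)
      simpa using this
    have hraw := (h1.mul (hd1 r hrr)).add (h2.mul (hd2 r hrr))
    refine hraw.congr_deriv ?_
    have e1 : r ^ β = r ^ (β-1) * r := by
      rw [← Real.rpow_add_one hrne]; ring_nf
    have e2 : r ^ (β+1) = r ^ β * r := Real.rpow_add_one hrne β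
    have heqr := heq r hrr
    -- deriv (deriv ξ) r = -((n-1)/r * deriv ξ r + c r * ξ r)
    have hξ'' : deriv (deriv ξ) r = -(((n:ℝ)-1)/r * deriv ξ r) - c r * ξ r := by
      linarith
    have hn1 : (n:ℝ) - 1 = 2*β + 1 := by rw [hβ]; ring
    simp only [hQ_def, hu_def]
    rw [hξ'', hn1, e2, e1]
    field_simp
    ring
  have hF' : ∀ r ∈ Ioi (0:ℝ),
      HasDerivAt F (Q r * u r ^ 2 + r * u1 r ^ 2) r := by
    intro r hrr
    have := (hg' r hrr).fun_mul (hu r hrr)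
    refine this.congr_deriv ?_
    rw [hgu r hrr]; ring
  have hsub : Icc r₁ r₂ ⊆ Ioi (0:ℝ) := fun x hx => lt_of_lt_of_le hr₁ hx.1
  have hFcont : ContinuousOn F (Icc r₁ r₂) := fun x hx =>
    (hF' x (hsub hx)).continuousAt.continuousWithinAt
  have hFmono : MonotoneOn F (Icc r₁ r₂) := by
    apply monotoneOn_of_hasDerivWithinAt_nonneg (convex_Icc r₁ r₂) hFcont
      (f' := fun r => Q r * u r ^ 2 + r * u1 r ^ 2)
    · intro x hx
      rw [interior_Icc] at hx
      exact (hF' x (hsub (Ioo_subset_Icc_self hx))).hasDerivWithinAt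
    · intro x hx
      rw [interior_Icc] at hx
      have hx0 : (0:ℝ) < x := lt_trans hr₁ hx.1
      have := hQ0 x hx0
      positivity
  have hF1 : F r₁ = 0 := by simp [hF_def, hu_def, hz₁]
  have hF2 : F r₂ = 0 := by simp [hF_def, hu_def, hz₂]
  have hFzero : ∀ x ∈ Icc r₁ r₂, F x = 0 := by
    intro x hx
    have h1 := hFmono (left_mem_Icc.2 hr.le) hx hx.1
    have h2 := hFmono hx (right_mem_Icc.2 hr.le) hx.2
    rw [hF1] at h1; rw [hF2] at h2; linarith
  have hu1zero : ∀ x ∈ Ioo r₁ r₂, u1 x = 0 := by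
    intro x hx
    have hx0 : (0:ℝ) < x := lt_trans hr₁ hx.1
    have hev : F =ᶠ[nhds x] (fun _ => (0:ℝ)) := by
      filter_upwards [isOpen_Ioo.mem_nhds hx] with y hy
      exact hFzero y (Ioo_subset_Icc_self hy)
    have hderiv0 : deriv F x = 0 := by
      rw [hev.deriv_eq]; simp
    have := (hF' x hx0).deriv
    rw [hderiv0] at this
    have hQx := hQ0 x hx0
    have h1 : (0:ℝ) ≤ Q x * u x ^ 2 := by positivity
    have h2 : (0:ℝ) ≤ x * u1 x ^ 2 := by positivity
    have h3 : x * u1 x ^ 2 = 0 := by linarith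
    have := mul_eq_zero.1 h3
    rcases this with h | h
    · exact absurd h (ne_of_gt hx0)
    · exact pow_eq_zero_iff (by norm_num) |>.1 h
  have huzero : ∀ x ∈ Icc r₁ r₂, u x = 0 := by
    have hucont : ContinuousOn u (Icc r₁ r₂) := fun x hx =>
      (hu x (hsub hx)).continuousAt.continuousWithinAt
    have humono : MonotoneOn u (Icc r₁ r₂) := by
      apply monotoneOn_of_hasDerivWithinAt_nonneg (convex_Icc r₁ r₂) hucont
        (f' := u1)
      · intro x hx
        rw [interior_Icc] at hx
        exact (hu x (hsub (Ioo_subset_Icc_self hx))).hasDerivWithinAt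
      · intro x hx
        rw [interior_Icc] at hx
        rw [hu1zero x hx]
    intro x hx
    have h1 := humono (left_mem_Icc.2 hr.le) hx hx.1
    have h2 := humono hx (right_mem_Icc.2 hr.le) hx.2
    have e1 : u r₁ = 0 := by simp [hu_def, hz₁]
    have e2 : u r₂ = 0 := by simp [hu_def, hz₂]
    rw [e1] at h1; rw [e2] at h2; linarith
  have hξIcc : ∀ x ∈ Icc r₁ r₂, ξ x = 0 := by
    intro x hx
    have hx0 : (0:ℝ) < x := lt_of_lt_of_le hr₁ hx.1
    have := huzero x hx
    simp only [hu_def] at this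
    have hp : (0:ℝ) < x ^ β := Real.rpow_pos_of_pos hx0 β
    rcases mul_eq_zero.1 this with h | h
    · exact absurd h (ne_of_gt hp)
    · exact h
  ------------------------------------------------------------------
  -- midpoint: ξ s = 0, deriv ξ s = 0
  ------------------------------------------------------------------
  set s : ℝ := (r₁ + r₂) / 2 with hs_def
  have hsIoo : s ∈ Ioo r₁ r₂ := ⟨by rw [hs_def]; linarith, by rw [hs_def]; linarith⟩
  have hs0 : (0:ℝ) < s := lt_trans hr₁ hsIoo.1
  have hξs : ξ s = 0 := hξIcc s (Ioo_subset_Icc_self hsIoo)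
  have hξ's : deriv ξ s = 0 := by
    have hev : ξ =ᶠ[nhds s] (fun _ => (0:ℝ)) := by
      filter_upwards [isOpen_Ioo.mem_nhds hsIoo] with y hy
      exact hξIcc y (Ioo_subset_Icc_self hy)
    rw [hev.deriv_eq]; simp
  ------------------------------------------------------------------
  -- Part 2: energy / Gronwall propagation
  ------------------------------------------------------------------
  set E : ℝ → ℝ := fun r => ξ r ^ 2 + deriv ξ r ^ 2 with hE_def
  set E1 : ℝ → ℝ := fun r => 2 * ξ r * deriv ξ r + 2 * deriv ξ r * deriv (deriv ξ) r
    with hE1_def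
  have hE' : ∀ r ∈ Ioi (0:ℝ), HasDerivAt E (E1 r) r := by
    intro r hrr
    have := ((hd1 r hrr).fun_pow 2).add ((hd2 r hrr).fun_pow 2)
    simp only [hE1_def]
    refine this.congr_deriv ?_
    push_cast
    ring
  have hEnonneg : ∀ r, 0 ≤ E r := by intro r; simp only [hE_def]; positivity
  have hEs : E s = 0 := by simp [hE_def, hξs, hξ's]
  -- bound |E1| ≤ K E on compact subintervals
  have key : ∀ a b : ℝ, 0 < a → a ≤ b →
      ∃ K : ℝ, ∀ r ∈ Icc a b, |E1 r| ≤ K * E r := by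
    intro a b ha hab
    have hsub' : Icc a b ⊆ Ioi (0:ℝ) := fun x hx => lt_of_lt_of_le ha hx.1
    obtain ⟨M, hM⟩ := (isCompact_Icc (a := a) (b := b)).exists_bound_of_continuousOn
      (hc.mono hsub')
    refine ⟨1 + 2*((n:ℝ)-1)/a + M, ?_⟩
    intro r hrr
    have hr0 : (0:ℝ) < r := lt_of_lt_of_le ha hrr.1
    have hcr : |c r| ≤ M := by simpa using hM r hrr
    have heqr := heq r hr0
    have hξ'' : deriv (deriv ξ) r = -(((n:ℝ)-1)/r * deriv ξ r) - c r * ξ r := by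
      linarith
    have hE1r : E1 r = 2 * ξ r * deriv ξ r - 2*((n:ℝ)-1)/r * deriv ξ r ^ 2
        - 2 * c r * ξ r * deriv ξ r := by
      simp only [hE1_def]; rw [hξ'']; ring
    have hb1 : |2 * ξ r * deriv ξ r| ≤ E r := by
      simp only [hE_def]
      have t1 := two_mul_le_add_sq (ξ r) (deriv ξ r)
      have t2 := two_mul_le_add_sq (ξ r) (-(deriv ξ r))
      rw [abs_le]
      refine ⟨by nlinarith [t2], by nlinarith [t1]⟩
    have hb2 : |2*((n:ℝ)-1)/r * deriv ξ r ^ 2| ≤ 2*((n:ℝ)-1)/a * E r := by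
      have hnum : (0:ℝ) ≤ 2*((n:ℝ)-1) := by linarith
      have hpos : (0:ℝ) ≤ 2*((n:ℝ)-1)/r := div_nonneg hnum hr0.le
      rw [abs_of_nonneg (mul_nonneg hpos (sq_nonneg _))]
      have h1 : 2*((n:ℝ)-1)/r ≤ 2*((n:ℝ)-1)/a :=
        div_le_div_of_nonneg_left hnum ha hrr.1
      have h2 : deriv ξ r ^ 2 ≤ E r := by simp only [hE_def]; nlinarith [sq_nonneg (ξ r)]
      exact mul_le_mul h1 h2 (sq_nonneg _) (div_nonneg hnum ha.le)
    have hb3 : |2 * c r * ξ r * deriv ξ r| ≤ M * E r := by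
      have e : 2 * c r * ξ r * deriv ξ r = c r * (2 * ξ r * deriv ξ r) := by ring
      rw [e, abs_mul]
      exact mul_le_mul hcr hb1 (abs_nonneg _) (le_trans (abs_nonneg _) hcr)
    rw [hE1r]
    have t1 : |2 * ξ r * deriv ξ r - 2*((n:ℝ)-1)/r * deriv ξ r ^ 2
        - 2 * c r * ξ r * deriv ξ r| ≤ |2 * ξ r * deriv ξ r|
        + |2*((n:ℝ)-1)/r * deriv ξ r ^ 2| + |2 * c r * ξ r * deriv ξ r| := by
      have w1 := abs_sub (2 * ξ r * deriv ξ r - 2*((n:ℝ)-1)/r * deriv ξ r ^ 2)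
        (2 * c r * ξ r * deriv ξ r)
      have w2 := abs_sub (2 * ξ r * deriv ξ r) (2*((n:ℝ)-1)/r * deriv ξ r ^ 2)
      linarith
    have tsum : |2 * ξ r * deriv ξ r| + |2*((n:ℝ)-1)/r * deriv ξ r ^ 2|
        + |2 * c r * ξ r * deriv ξ r| ≤ (1 + 2*((n:ℝ)-1)/a + M) * E r := by
      have e : (1 + 2*((n:ℝ)-1)/a + M) * E r
          = E r + 2*((n:ℝ)-1)/a * E r + M * E r := by ring
      rw [e]
      exact add_le_add (add_le_add hb1 hb2) hb3
    exact le_trans t1 tsum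
  -- forward propagation
  have forward : ∀ a b : ℝ, 0 < a → a ≤ b → E a = 0 → E b = 0 := by
    intro a b ha hab hEa
    obtain ⟨K, hK⟩ := key a b ha hab
    set h : ℝ → ℝ := fun r => E r * Real.exp (-K * r) with hh_def
    have hsub' : Icc a b ⊆ Ioi (0:ℝ) := fun x hx => lt_of_lt_of_le ha hx.1
    have hh' : ∀ r ∈ Ioi (0:ℝ),
        HasDerivAt h ((E1 r - K * E r) * Real.exp (-K * r)) r := by
      intro r hrr
      have he : HasDerivAt (fun r : ℝ => Real.exp (-K * r)) (-K * Real.exp (-K * r)) r := by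
        have h0 : HasDerivAt (fun x : ℝ => -K * x) (-K) r := by
          simpa using (hasDerivAt_id r).const_mul (-K)
        simpa [mul_comm] using h0.exp
      have := (hE' r hrr).fun_mul he
      refine this.congr_deriv ?_
      ring
    have hcont : ContinuousOn h (Icc a b) := fun x hx =>
      (hh' x (hsub' hx)).continuousAt.continuousWithinAt
    have hanti : AntitoneOn h (Icc a b) := by
      apply antitoneOn_of_hasDerivWithinAt_nonpos (convex_Icc a b) hcont
        (f' := fun r => (E1 r - K * E r) * Real.exp (-K * r))
      · intro x hx
        rw [interior_Icc] at hx
        exact (hh' x (hsub' (Ioo_subset_Icc_self hx))).hasDerivWithinAt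
      · intro x hx
        rw [interior_Icc] at hx
        have hxm : x ∈ Icc a b := Ioo_subset_Icc_self hx
        have := hK x hxm
        have h1 : E1 x ≤ K * E x := le_trans (le_abs_self _) this
        have h2 : (0:ℝ) < Real.exp (-K * x) := Real.exp_pos _
        nlinarith
    have h1 := hanti (left_mem_Icc.2 hab) (right_mem_Icc.2 hab) hab
    have h2 : h a = 0 := by simp [hh_def, hEa]
    have h3 : 0 ≤ h b := by
      simp only [hh_def]
      have := hEnonneg b
      positivity
    have h4 : h b = 0 := le_antisymm (h2 ▸ h1) h3
    simp only [hh_def] at h4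
    rcases mul_eq_zero.1 h4 with h | h
    · exact h
    · exact absurd h (ne_of_gt (Real.exp_pos _))
  -- backward propagation
  have backward : ∀ a b : ℝ, 0 < a → a ≤ b → E b = 0 → E a = 0 := by
    intro a b ha hab hEb
    obtain ⟨K, hK⟩ := key a b ha hab
    set h : ℝ → ℝ := fun r => E r * Real.exp (K * r) with hh_def
    have hsub' : Icc a b ⊆ Ioi (0:ℝ) := fun x hx => lt_of_lt_of_le ha hx.1
    have hh' : ∀ r ∈ Ioi (0:ℝ),
        HasDerivAt h ((E1 r + K * E r) * Real.exp (K * r)) r := by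
      intro r hrr
      have he : HasDerivAt (fun r : ℝ => Real.exp (K * r)) (K * Real.exp (K * r)) r := by
        have h0 : HasDerivAt (fun x : ℝ => K * x) K r := by
          simpa using (hasDerivAt_id r).const_mul K
        simpa [mul_comm] using h0.exp
      have := (hE' r hrr).fun_mul he
      refine this.congr_deriv ?_
      ring
    have hcont : ContinuousOn h (Icc a b) := fun x hx =>
      (hh' x (hsub' hx)).continuousAt.continuousWithinAt
    have hmono : MonotoneOn h (Icc a b) := by
      apply monotoneOn_of_hasDerivWithinAt_nonneg (convex_Icc a b) hcont
        (f' := fun r => (E1 r + K * E r) * Real.exp (K * r))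
      · intro x hx
        rw [interior_Icc] at hx
        exact (hh' x (hsub' (Ioo_subset_Icc_self hx))).hasDerivWithinAt
      · intro x hx
        rw [interior_Icc] at hx
        have hxm : x ∈ Icc a b := Ioo_subset_Icc_self hx
        have := hK x hxm
        have h1 : -(K * E x) ≤ E1 x := by
          have := neg_abs_le (E1 x)
          linarith
        have h2 : (0:ℝ) < Real.exp (K * x) := Real.exp_pos _
        nlinarith
    have h1 := hmono (left_mem_Icc.2 hab) (right_mem_Icc.2 hab) hab
    have h2 : h b = 0 := by simp [hh_def, hEb]
    have h3 : 0 ≤ h a := by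
      simp only [hh_def]
      have := hEnonneg a
      positivity
    have h4 : h a = 0 := le_antisymm (h2 ▸ h1) h3
    simp only [hh_def] at h4
    rcases mul_eq_zero.1 h4 with h | h
    · exact h
    · exact absurd h (ne_of_gt (Real.exp_pos _))
  ------------------------------------------------------------------
  -- Conclusion
  ------------------------------------------------------------------
  intro t ht
  have hEt : E t = 0 := by
    rcases le_total t s with h | h
    · exact backward t s ht h hEs
    · exact forward s t hs0 h hEs
  simp only [hE_def] at hEt
  nlinarith [sq_nonneg (ξ t), sq_nonneg (deriv ξ t)]
end

section
/- Let n ≥ 3 be an integer and let c : (0,∞) → ℝ be a continuous function satisfying c(r) ≤ 1/(4r²) for all r > 0. If ξ : (0,∞) → ℝ is a C² solution of ξ''(r) + ((n−1)/r)·ξ'(r) + c(r)·ξ(r) = 0 with ξ'(r₁) = 0 and ξ(r₂) = 0 for some 0 < r₁ < r₂, then ξ is identically zero. -/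
open Set

private lemma jacobi_zero_of_init
    (b c ξ f g : ℝ → ℝ)
    (hb : ContinuousOn b (Ioi 0)) (hc : ContinuousOn c (Ioi 0))
    (h1 : ∀ r ∈ Ioi (0:ℝ), HasDerivAt ξ (f r) r)
    (h2 : ∀ r ∈ Ioi (0:ℝ), HasDerivAt f (g r) r)
    (heq : ∀ r ∈ Ioi (0:ℝ), g r + b r * f r + c r * ξ r = 0)
    (r₁ : ℝ) (hr₁ : 0 < r₁) (hξ₁ : ξ r₁ = 0) (hf₁ : f r₁ = 0) :
    ∀ r ∈ Ioi (0:ℝ), ξ r = 0 := by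
  set E : ℝ → ℝ := fun t => ξ t * ξ t + f t * f t with hEdef
  set DE : ℝ → ℝ := fun t => (f t * ξ t + ξ t * f t) + (g t * f t + f t * g t) with hDEdef
  have hE : ∀ t ∈ Ioi (0:ℝ), HasDerivAt E (DE t) t := fun t ht =>
    ((h1 t ht).mul (h1 t ht)).add ((h2 t ht).mul (h2 t ht))
  have hE₁ : E r₁ = 0 := by simp [hEdef, hξ₁, hf₁]
  have hEnn : ∀ t : ℝ, 0 ≤ E t := fun t => by
    simp only [hEdef]
    nlinarith [mul_self_nonneg (ξ t), mul_self_nonneg (f t)]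
  have bound : ∀ a b' : ℝ, 0 < a → Icc a b' ⊆ Ioi (0:ℝ) →
      ∃ M : ℝ, 0 ≤ M ∧ ∀ y ∈ Icc a b', |DE y| ≤ M * E y := by
    intro a b' ha hsub
    obtain ⟨Cb, hCb⟩ := (isCompact_Icc (a := a) (b := b')).exists_bound_of_continuousOn
      (hb.mono hsub)
    obtain ⟨Cc, hCc⟩ := (isCompact_Icc (a := a) (b := b')).exists_bound_of_continuousOn
      (hc.mono hsub)
    set C : ℝ := |Cb| + |Cc| with hCdef
    have hC0 : 0 ≤ C := by positivity
    refine ⟨1 + 3 * C, by linarith, fun y hy => ?_⟩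
    have hby : |b y| ≤ C := by
      have h := hCb y hy
      rw [Real.norm_eq_abs] at h
      have : Cb ≤ |Cb| := le_abs_self _
      have : (0:ℝ) ≤ |Cc| := abs_nonneg _
      unfold C; linarith
    have hcy : |c y| ≤ C := by
      have h := hCc y hy
      rw [Real.norm_eq_abs] at h
      have : Cc ≤ |Cc| := le_abs_self _
      have : (0:ℝ) ≤ |Cb| := abs_nonneg _
      unfold C; linarith
    have hgy : g y = -(b y * f y + c y * ξ y) := by
      have := heq y (hsub hy); linarith
    rw [abs_le] at hby hcy ⊢
    obtain ⟨hb1, hb2⟩ := hby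
    obtain ⟨hc1, hc2⟩ := hcy
    constructor
    · simp only [hDEdef, hEdef, hgy]
      nlinarith [sq_nonneg (ξ y - f y), sq_nonneg (ξ y + f y), sq_nonneg (f y), sq_nonneg (ξ y),
        mul_nonneg (sub_nonneg.2 hc2) (sq_nonneg (ξ y - f y)),
        mul_nonneg (by linarith : (0:ℝ) ≤ C + c y) (sq_nonneg (ξ y + f y)),
        mul_nonneg (sub_nonneg.2 hb2) (sq_nonneg (f y)),
        mul_nonneg (by linarith : (0:ℝ) ≤ C + b y) (sq_nonneg (f y))]
    · simp only [hDEdef, hEdef, hgy]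
      nlinarith [sq_nonneg (ξ y - f y), sq_nonneg (ξ y + f y), sq_nonneg (f y), sq_nonneg (ξ y),
        mul_nonneg (sub_nonneg.2 hc2) (sq_nonneg (ξ y + f y)),
        mul_nonneg (by linarith : (0:ℝ) ≤ C + c y) (sq_nonneg (ξ y - f y)),
        mul_nonneg (sub_nonneg.2 hb2) (sq_nonneg (f y)),
        mul_nonneg (by linarith : (0:ℝ) ≤ C + b y) (sq_nonneg (f y))]
  intro r hrpos
  rcases lt_trichotomy r r₁ with hlt | heqr | hgt
  · -- backward: r < r₁, use G = E * exp (M t) monotone on [r, r₁]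
    have hsub : Icc r r₁ ⊆ Ioi (0:ℝ) := fun x hx => lt_of_lt_of_le hrpos hx.1
    obtain ⟨M, hM0, hMb⟩ := bound r r₁ hrpos hsub
    set G : ℝ → ℝ := fun t => E t * Real.exp (M * t) with hGdef
    have hG : ∀ t ∈ Ioi (0:ℝ), HasDerivAt G (DE t * Real.exp (M * t) + E t * (Real.exp (M * t) * M)) t := by
      intro t ht
      have hexp : HasDerivAt (fun t => Real.exp (M * t)) (Real.exp (M * t) * M) t := by
        have hin : HasDerivAt (fun t : ℝ => M * t) M t := by
          simpa using (hasDerivAt_id t).const_mul M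
        exact hin.exp
      exact (hE t ht).mul hexp
    have hmono : MonotoneOn G (Icc r r₁) := by
      apply monotoneOn_of_deriv_nonneg (convex_Icc r r₁)
      · exact fun x hx => ((hG x (hsub hx)).continuousAt).continuousWithinAt
      · intro x hx
        rw [interior_Icc] at hx
        exact ((hG x (hsub (Ioo_subset_Icc_self hx))).differentiableAt).differentiableWithinAt
      · intro x hx
        rw [interior_Icc] at hx
        have hxI := hsub (Ioo_subset_Icc_self hx)
        rw [(hG x hxI).deriv]
        have hDEx := hMb x (Ioo_subset_Icc_self hx)
        rw [abs_le] at hDEx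
        have hex := Real.exp_pos (M * x)
        nlinarith [hDEx.1, hex.le]
    have hle : G r ≤ G r₁ := hmono ⟨le_refl r, hlt.le⟩ ⟨hlt.le, le_refl r₁⟩ hlt.le
    have hGr₁ : G r₁ = 0 := by simp [hGdef, hE₁]
    have hEr : E r ≤ 0 := by
      rw [hGr₁] at hle
      simp only [hGdef] at hle
      by_contra h
      push_neg at h
      nlinarith [mul_pos h (Real.exp_pos (M * r))]
    have := hEnn r
    have hEr0 : E r = 0 := le_antisymm hEr this
    simp only [hEdef] at hEr0
    nlinarith [mul_self_nonneg (ξ r), mul_self_nonneg (f r)]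
  · rw [heqr]; exact hξ₁
  · -- forward: r₁ < r, use F = E * exp (-(M t)) antitone on [r₁, r]
    have hsub : Icc r₁ r ⊆ Ioi (0:ℝ) := fun x hx => lt_of_lt_of_le hr₁ hx.1
    obtain ⟨M, hM0, hMb⟩ := bound r₁ r hr₁ hsub
    set F : ℝ → ℝ := fun t => E t * Real.exp (-(M * t)) with hFdef
    have hF : ∀ t ∈ Ioi (0:ℝ), HasDerivAt F (DE t * Real.exp (-(M * t)) + E t * (Real.exp (-(M * t)) * (-M))) t := by
      intro t ht
      have hexp : HasDerivAt (fun t => Real.exp (-(M * t))) (Real.exp (-(M * t)) * (-M)) t := by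
        have hin : HasDerivAt (fun t : ℝ => -(M * t)) (-M) t := by
          have h := ((hasDerivAt_id' t).const_mul M).neg
          rw [mul_one] at h
          exact h
        exact hin.exp
      exact (hE t ht).mul hexp
    have hanti : AntitoneOn F (Icc r₁ r) := by
      apply antitoneOn_of_deriv_nonpos (convex_Icc r₁ r)
      · exact fun x hx => ((hF x (hsub hx)).continuousAt).continuousWithinAt
      · intro x hx
        rw [interior_Icc] at hx
        exact ((hF x (hsub (Ioo_subset_Icc_self hx))).differentiableAt).differentiableWithinAt
      · intro x hx
        rw [interior_Icc] at hx
        have hxI := hsub (Ioo_subset_Icc_self hx)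
        rw [(hF x hxI).deriv]
        have hDEx := hMb x (Ioo_subset_Icc_self hx)
        rw [abs_le] at hDEx
        have hex := Real.exp_pos (-(M * x))
        nlinarith [hDEx.2, hex.le]
    have hle : F r ≤ F r₁ := hanti ⟨le_refl r₁, hgt.le⟩ ⟨hgt.le, le_refl r⟩ hgt.le
    have hFr₁ : F r₁ = 0 := by simp [hFdef, hE₁]
    have hEr : E r ≤ 0 := by
      rw [hFr₁] at hle
      simp only [hFdef] at hle
      by_contra h
      push_neg at h
      nlinarith [mul_pos h (Real.exp_pos (-(M * r)))]
    have := hEnn r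
    have hEr0 : E r = 0 := le_antisymm hEr this
    simp only [hEdef] at hEr0
    nlinarith [mul_self_nonneg (ξ r), mul_self_nonneg (f r)]

private lemma jacobi_pos_false
    {n : ℕ} (hn : 3 ≤ n) (c ξ f g : ℝ → ℝ)
    (hcb : ∀ r : ℝ, 0 < r → c r ≤ 1 / (4 * r ^ 2))
    (h1 : ∀ r ∈ Ioi (0:ℝ), HasDerivAt ξ (f r) r)
    (h2 : ∀ r ∈ Ioi (0:ℝ), HasDerivAt f (g r) r)
    (heq : ∀ r ∈ Ioi (0:ℝ), g r + ((n:ℝ) - 1) / r * f r + c r * ξ r = 0)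
    (r₁ r₂ : ℝ) (hr₁ : 0 < r₁) (hr : r₁ < r₂)
    (hz₁ : f r₁ = 0) (hz₂ : ξ r₂ = 0) (hpos : 0 < ξ r₁) : False := by
  have hr₂ : (0:ℝ) < r₂ := hr₁.trans hr
  have hsub : Icc r₁ r₂ ⊆ Ioi (0:ℝ) := fun x hx => lt_of_lt_of_le hr₁ hx.1
  have hξcont : ContinuousOn ξ (Icc r₁ r₂) :=
    fun x hx => ((h1 x (hsub hx)).continuousAt).continuousWithinAt
  -- first zero of ξ in [r₁, r₂]
  set Z : Set ℝ := Icc r₁ r₂ ∩ ξ ⁻¹' {0} with hZdef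
  have hZne : Z.Nonempty := ⟨r₂, ⟨⟨hr.le, le_refl r₂⟩, hz₂⟩⟩
  have hZclosed : IsClosed Z :=
    ContinuousOn.preimage_isClosed_of_isClosed hξcont isClosed_Icc isClosed_singleton
  have hZbdd : BddBelow Z := ⟨r₁, fun x hx => hx.1.1⟩
  set s := sInf Z with hsdef
  have hsZ : s ∈ Z := hZclosed.csInf_mem hZne hZbdd
  have hξs : ξ s = 0 := hsZ.2
  have hsIcc : s ∈ Icc r₁ r₂ := hsZ.1
  have hspos : (0:ℝ) < s := lt_of_lt_of_le hr₁ hsIcc.1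
  have hr₁s : r₁ < s := by
    rcases lt_or_eq_of_le hsIcc.1 with h | h
    · exact h
    · exfalso; rw [← h] at hξs; linarith
  -- ξ > 0 on [r₁, s)
  have hξpos : ∀ x ∈ Ico r₁ s, 0 < ξ x := by
    intro x hx
    by_contra hle
    push_neg at hle
    have hxIcc : x ∈ Icc r₁ r₂ := ⟨hx.1, le_trans hx.2.le hsIcc.2⟩
    rcases lt_or_eq_of_le hle with hlt | heq0
    · -- IVT: a zero in [r₁, x]
      have hcont' : ContinuousOn ξ (Icc r₁ x) := hξcont.mono (Icc_subset_Icc le_rfl hxIcc.2)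
      have : (0:ℝ) ∈ ξ '' Icc r₁ x := by
        apply intermediate_value_Icc' hx.1 hcont'
        exact ⟨hlt.le, hpos.le⟩
      obtain ⟨y, hyIcc, hy0⟩ := this
      have : y ∈ Z := ⟨⟨hyIcc.1, le_trans hyIcc.2 hxIcc.2⟩, hy0⟩
      have := csInf_le hZbdd this
      have : s ≤ x := le_trans this hyIcc.2
      exact absurd hx.2 (not_lt.2 this)
    · have : x ∈ Z := ⟨hxIcc, heq0⟩
      have := csInf_le hZbdd this
      exact absurd hx.2 (not_lt.2 this)
  have hξnn : ∀ x ∈ Icc r₁ s, 0 ≤ ξ x := by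
    intro x hx
    rcases lt_or_eq_of_le hx.2 with h | h
    · exact (hξpos x ⟨hx.1, h⟩).le
    · rw [h, hξs]
  -- f s ≤ 0
  have hfs : f s ≤ 0 := by
    have hd := (h1 s (mem_Ioi.2 hspos))
    rw [hasDerivAt_iff_tendsto_slope] at hd
    have hd' : Filter.Tendsto (slope ξ s) (nhdsWithin s (Iio s)) (nhds (f s)) :=
      hd.mono_left (nhdsWithin_mono s fun x hx => ne_of_lt hx)
    refine le_of_tendsto hd' ?_
    filter_upwards [Ioo_mem_nhdsLT_of_mem ⟨hr₁s, le_refl s⟩] with x hx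
    have hxpos := hξnn x ⟨hx.1.le, hx.2.le⟩
    rw [slope_def_field]
    rw [div_nonpos_iff]
    left
    constructor
    · rw [hξs]; linarith
    · linarith [hx.2]
  -- the Wronskian-type function
  set W : ℝ → ℝ := fun x => x ^ ((n:ℝ) - 5/2) * (x * f x + ξ x / 2) with hWdef
  set DW : ℝ → ℝ := fun x =>
    ((n:ℝ) - 5/2) * x ^ ((n:ℝ) - 5/2 - 1) * (x * f x + ξ x / 2)
      + x ^ ((n:ℝ) - 5/2) * ((1 * f x + x * g x) + f x / 2) with hDWdef
  have hW : ∀ x ∈ Ioi (0:ℝ), HasDerivAt W (DW x) x := by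
    intro x hx
    have hx0 : x ≠ 0 := ne_of_gt hx
    have hp : HasDerivAt (fun y : ℝ => y ^ ((n:ℝ) - 5/2))
        (((n:ℝ) - 5/2) * x ^ ((n:ℝ) - 5/2 - 1)) x :=
      Real.hasDerivAt_rpow_const (Or.inl hx0)
    have hq : HasDerivAt (fun y => y * f y + ξ y / 2) ((1 * f x + x * g x) + f x / 2) x :=
      ((hasDerivAt_id x).mul (h2 x hx)).add ((h1 x hx).div_const 2)
    exact hp.mul hq
  -- DW ≥ 0 on Ioo r₁ s
  have hDWnn : ∀ x ∈ Ioo r₁ s, 0 ≤ DW x := by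
    intro x hx
    have hxpos : (0:ℝ) < x := hr₁.trans hx.1
    have hxI : x ∈ Ioi (0:ℝ) := hxpos
    have hgx : x * g x = -(((n:ℝ) - 1) * f x + c x * ξ x * x) := by
      have h := heq x hxI
      field_simp at h
      nlinarith [h]
    have hrw : x ^ ((n:ℝ) - 5/2) = x ^ ((n:ℝ) - 5/2 - 1) * x := by
      rw [← Real.rpow_add_one (ne_of_gt hxpos)]
      ring_nf
    have hpw : (0:ℝ) < x ^ ((n:ℝ) - 5/2 - 1) := Real.rpow_pos_of_pos hxpos _
    have hcx : c x * x ^ 2 ≤ 1/4 := by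
      have := hcb x hxpos
      have hx2 : (0:ℝ) < x ^ 2 := by positivity
      rw [div_eq_mul_inv] at this
      calc c x * x ^ 2 ≤ (1 * (4 * x ^ 2)⁻¹) * x ^ 2 := by
            apply mul_le_mul_of_nonneg_right this hx2.le
        _ = 1/4 := by field_simp
    have hξx : 0 ≤ ξ x := hξnn x ⟨hx.1.le, hx.2.le⟩
    have hn' : (3:ℝ) ≤ (n:ℝ) := by exact_mod_cast hn
    simp only [hDWdef]
    rw [hrw, hgx]
    have key : (((n:ℝ) - 5/2) * (x * f x + ξ x / 2)
        + x * ((1 * f x + -(((n:ℝ) - 1) * f x + c x * ξ x * x)) + f x / 2))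
        = ξ x * (((n:ℝ) - 5/2) / 2 - c x * x ^ 2) := by ring
    have : (0:ℝ) ≤ ξ x * (((n:ℝ) - 5/2) / 2 - c x * x ^ 2) := by
      apply mul_nonneg hξx
      linarith
    nlinarith [this, hpw]
  -- monotone
  have hIccsub : Icc r₁ s ⊆ Ioi (0:ℝ) := fun x hx => lt_of_lt_of_le hr₁ hx.1
  have hmono : MonotoneOn W (Icc r₁ s) := by
    apply monotoneOn_of_deriv_nonneg (convex_Icc r₁ s)
    · exact fun x hx => ((hW x (hIccsub hx)).continuousAt).continuousWithinAt
    · intro x hx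
      rw [interior_Icc] at hx
      exact ((hW x (hIccsub (Ioo_subset_Icc_self hx))).differentiableAt).differentiableWithinAt
    · intro x hx
      rw [interior_Icc] at hx
      rw [(hW x (hIccsub (Ioo_subset_Icc_self hx))).deriv]
      exact hDWnn x hx
  have hle : W r₁ ≤ W s := hmono ⟨le_refl r₁, hr₁s.le⟩ ⟨hr₁s.le, le_refl s⟩ hr₁s.le
  have hWr₁ : 0 < W r₁ := by
    simp only [hWdef, hz₁, hξs]
    have : (0:ℝ) < r₁ ^ ((n:ℝ) - 5/2) := Real.rpow_pos_of_pos hr₁ _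
    nlinarith [this, hpos]
  have hWs : W s ≤ 0 := by
    simp only [hWdef, hξs]
    have hps : (0:ℝ) < s ^ ((n:ℝ) - 5/2) := Real.rpow_pos_of_pos hspos _
    have : s * f s ≤ 0 := mul_nonpos_of_nonneg_of_nonpos hspos.le hfs
    nlinarith [hps, this]
  linarith

/-- Absence of focal points for the radial Jacobi equation in dimension `n ≥ 3`:
if `c(r) ≤ 1/(4r²)` and `ξ` solves `ξ'' + ((n-1)/r)ξ' + c(r)ξ = 0` on `(0,∞)`
with `ξ'(r₁) = 0` and `ξ(r₂) = 0` for some `0 < r₁ < r₂`, then `ξ ≡ 0`. -/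
theorem radial_jacobi_no_focal_points
    {n : ℕ} (hn : 3 ≤ n)
    (c : ℝ → ℝ) (hc : ContinuousOn c (Ioi 0))
    (hcb : ∀ r : ℝ, 0 < r → c r ≤ 1 / (4 * r ^ 2))
    (ξ : ℝ → ℝ) (hξ : ContDiffOn ℝ 2 ξ (Ioi 0))
    (heq : ∀ r ∈ Ioi (0 : ℝ),
      deriv (deriv ξ) r + ((n : ℝ) - 1) / r * deriv ξ r + c r * ξ r = 0)
    (r₁ r₂ : ℝ) (hr₁ : 0 < r₁) (hr : r₁ < r₂)
    (hz₁ : deriv ξ r₁ = 0) (hz₂ : ξ r₂ = 0) :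
    ∀ r ∈ Ioi (0 : ℝ), ξ r = 0 := by
  have hd1 : DifferentiableOn ℝ ξ (Ioi 0) := hξ.differentiableOn (by norm_num)
  have h1 : ∀ r ∈ Ioi (0:ℝ), HasDerivAt ξ (deriv ξ r) r := fun r hr =>
    ((hd1 r hr).differentiableAt (isOpen_Ioi.mem_nhds hr)).hasDerivAt
  have hf : ContDiffOn ℝ 1 (deriv ξ) (Ioi 0) :=
    hξ.deriv_of_isOpen isOpen_Ioi (by norm_num)
  have hd2 : DifferentiableOn ℝ (deriv ξ) (Ioi 0) := hf.differentiableOn (by norm_num)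
  have h2 : ∀ r ∈ Ioi (0:ℝ), HasDerivAt (deriv ξ) (deriv (deriv ξ) r) r := fun r hr =>
    ((hd2 r hr).differentiableAt (isOpen_Ioi.mem_nhds hr)).hasDerivAt
  rcases lt_trichotomy (ξ r₁) 0 with hneg | hzero | hposv
  · exact absurd (jacobi_pos_false hn c (fun r => -ξ r) (fun r => -deriv ξ r)
      (fun r => -deriv (deriv ξ) r) hcb
      (fun r hr => (h1 r hr).neg) (fun r hr => (h2 r hr).neg)
      (fun r hr => by have := heq r hr; linarith)
      r₁ r₂ hr₁ hr (by simp [hz₁]) (by simp [hz₂]) (by simpa using hneg)) id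
  · exact jacobi_zero_of_init (fun r => ((n:ℝ) - 1) / r) c ξ (deriv ξ) (deriv (deriv ξ))
      (continuousOn_const.div continuousOn_id (fun x hx => ne_of_gt hx)) hc
      h1 h2 heq r₁ hr₁ hzero hz₁
  · exact absurd (jacobi_pos_false hn c ξ (deriv ξ) (deriv (deriv ξ)) hcb
      h1 h2 heq r₁ r₂ hr₁ hr hz₁ hz₂ hposv) id
end

section
/- Let B > 0, let t₀ < t₁ be real numbers, and let ω : [t₀,t₁] → ℝ be a differentiable function satisfying ω'(t) ≤ B² − ω(t)² for all t ∈ [t₀,t₁]. If ω(t₀) < −B, then t₁ − t₀ < (1/(2B))·ln( (ω(t₀) − B)/(ω(t₀) + B) ). -/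
open Set

-- helper: decrease lemma
lemma decr_aux (a b : ℝ) (hab : a ≤ b) (g g' : ℝ → ℝ)
    (hd : ∀ t ∈ Icc a b, HasDerivAt g (g' t) t)
    (hle : ∀ t ∈ Ioo a b, g' t ≤ 0) : g b ≤ g a := by
  have hmono : AntitoneOn g (Icc a b) := by
    apply antitoneOn_of_deriv_nonpos (convex_Icc a b)
    · exact fun t ht => (hd t ht).continuousAt.continuousWithinAt
    · intro t ht
      rw [interior_Icc] at ht
      exact ((hd t (Ioo_subset_Icc_self ht)).differentiableAt.differentiableWithinAt)
    · intro t ht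
      rw [interior_Icc] at ht
      rw [(hd t (Ioo_subset_Icc_self ht)).deriv]
      exact hle t ht
  exact hmono (left_mem_Icc.2 hab) (right_mem_Icc.2 hab) hab

/-- Riccati blow-up estimate: a subsolution of `ω' ≤ B² - ω²` on `[t₀, t₁]` with
`ω(t₀) < -B` can only exist for a time shorter than
`(1/(2B))·log((ω(t₀) - B)/(ω(t₀) + B))`. -/
theorem riccati_blowup_time
    (B t₀ t₁ : ℝ) (hB : 0 < B) (ht : t₀ < t₁)
    (ω ω' : ℝ → ℝ)
    (hderiv : ∀ t ∈ Icc t₀ t₁, HasDerivAt ω (ω' t) t)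
    (hineq : ∀ t ∈ Icc t₀ t₁, ω' t ≤ B ^ 2 - (ω t) ^ 2)
    (h0 : ω t₀ < -B) :
    t₁ - t₀ < 1 / (2 * B) * Real.log ((ω t₀ - B) / (ω t₀ + B)) := by
  -- Step 1: ω t < -B on the whole interval
  have hlt : ∀ t ∈ Icc t₀ t₁, ω t < -B := by
    by_contra hcon
    push_neg at hcon
    obtain ⟨u, hu, hωu⟩ := hcon
    set S : Set ℝ := {t ∈ Icc t₀ t₁ | -B ≤ ω t} with hS
    have hne : S.Nonempty := ⟨u, hu, hωu⟩
    have hbdd : BddBelow S := ⟨t₀, fun x hx => hx.1.1⟩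
    have hclosed : IsClosed S := by
      have hcont : ContinuousOn ω (Icc t₀ t₁) :=
        fun t htI => (hderiv t htI).continuousAt.continuousWithinAt
      exact IsClosed.isClosed_le isClosed_Icc continuousOn_const hcont
    have hsmem : sInf S ∈ S := hclosed.csInf_mem hne hbdd
    set s := sInf S with hsdef
    have hst₀ : t₀ < s := by
      rcases lt_or_eq_of_le hsmem.1.1 with h | h
      · exact h
      · exact absurd hsmem.2 (by rw [← h]; linarith)
    have hIcc : Icc t₀ s ⊆ Icc t₀ t₁ :=
      Icc_subset_Icc le_rfl hsmem.1.2
    have hbelow : ∀ t ∈ Ico t₀ s, ω t < -B := by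
      intro t htI
      by_contra hge
      push_neg at hge
      have : t ∈ S := ⟨⟨htI.1, le_trans htI.2.le hsmem.1.2⟩, hge⟩
      exact absurd (csInf_le hbdd this) (not_le.2 htI.2)
    have hdec : ω s ≤ ω t₀ := by
      apply decr_aux t₀ s hst₀.le ω ω' (fun t htI => hderiv t (hIcc htI))
      intro t htI
      have htI' : t ∈ Icc t₀ t₁ := hIcc (Ioo_subset_Icc_self htI)
      have h1 : ω t < -B := hbelow t ⟨htI.1.le, htI.2⟩
      have h2 : B ^ 2 < (ω t) ^ 2 := by nlinarith
      have := hineq t htI'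
      linarith
    linarith [hsmem.2]
  -- setup
  set g : ℝ → ℝ := fun t => 1 / (2 * B) * (Real.log (ω t - B) - Real.log (ω t + B)) + t
    with hg
  have key : ∀ t ∈ Icc t₀ t₁,
      HasDerivAt g (1 / (2 * B) * ((ω t - B)⁻¹ * ω' t - (ω t + B)⁻¹ * ω' t) + 1) t := by
    intro t htI
    have h1 : ω t - B ≠ 0 := by have := hlt t htI; intro h; nlinarith
    have h2 : ω t + B ≠ 0 := by have := hlt t htI; intro h; nlinarith
    have d1 : HasDerivAt (fun t => Real.log (ω t - B)) ((ω t - B)⁻¹ * ω' t) t :=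
      by have := (Real.hasDerivAt_log h1).comp t ((hderiv t htI).sub_const B); exact this
    have d2 : HasDerivAt (fun t => Real.log (ω t + B)) ((ω t + B)⁻¹ * ω' t) t :=
      by have := (Real.hasDerivAt_log h2).comp t ((hderiv t htI).add_const B); exact this
    exact (((d1.sub d2).const_mul (1 / (2 * B))).add (hasDerivAt_id t))
  have hmain : g t₁ ≤ g t₀ := by
    apply decr_aux t₀ t₁ ht.le g _ key
    intro t htI
    have htI' : t ∈ Icc t₀ t₁ := Ioo_subset_Icc_self htI
    have hωt := hlt t htI'
    have hP : 0 < (ω t) ^ 2 - B ^ 2 := by nlinarith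
    have h1 : ω t - B ≠ 0 := by nlinarith
    have h2 : ω t + B ≠ 0 := by nlinarith
    have hid : 1 / (2 * B) * ((ω t - B)⁻¹ * ω' t - (ω t + B)⁻¹ * ω' t)
        = ω' t / ((ω t) ^ 2 - B ^ 2) := by
      field_simp
      ring
    rw [hid]
    have hle : ω' t ≤ -((ω t) ^ 2 - B ^ 2) := by have := hineq t htI'; linarith
    have : ω' t / ((ω t) ^ 2 - B ^ 2) ≤ -1 := by
      rw [div_le_iff₀ hP]; linarith
    linarith
  -- g t₁ > t₁ : the log part at t₁ is positive
  have hpos : 0 < Real.log (ω t₁ - B) - Real.log (ω t₁ + B) := by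
    have hω1 := hlt t₁ (right_mem_Icc.2 ht.le)
    have hlog : Real.log (ω t₁ + B) < Real.log (ω t₁ - B) := by
      rw [← Real.log_neg_eq_log (ω t₁ + B), ← Real.log_neg_eq_log (ω t₁ - B)]
      apply Real.log_lt_log (by linarith)
      linarith
    linarith
  have hB' : 0 < 1 / (2 * B) := by positivity
  have hlogdiv : Real.log ((ω t₀ - B) / (ω t₀ + B))
      = Real.log (ω t₀ - B) - Real.log (ω t₀ + B) :=
    Real.log_div (by linarith) (by linarith)
  have := hmain
  simp only [hg] at this
  rw [hlogdiv]
  nlinarith [mul_pos hB' hpos]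
end

section
/- Let B > 0 and let ω : ℝ → ℝ be a differentiable function satisfying ω'(t) ≤ B² − ω(t)² for all t ∈ ℝ. Then |ω(t)| ≤ B for all t ∈ ℝ. -/
open Set

/-- Auxiliary: a global subsolution of the Riccati inequality is bounded below by `-B`. -/
theorem riccati_lower_aux
    (B : ℝ) (hB : 0 < B) (ω ω' : ℝ → ℝ)
    (hderiv : ∀ t, HasDerivAt ω (ω' t) t)
    (hineq : ∀ t, ω' t ≤ B ^ 2 - (ω t) ^ 2) :
    ∀ t, -B ≤ ω t := by
  intro t₀
  by_contra hcon
  push_neg at hcon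
  set a := ω t₀ with ha
  have haB : a < -B := hcon
  have haneg : a < 0 := by linarith
  have ha2 : B ^ 2 < a ^ 2 := by nlinarith
  have hcont : Continuous ω := continuous_iff_continuousAt.mpr fun x => (hderiv x).continuousAt
  -- invariance: ω stays ≤ a to the right of t₀
  have hinv : ∀ T, ∀ s ∈ Icc t₀ T, ω s ≤ a := by
    intro T
    have := image_le_of_deriv_right_lt_deriv_boundary
      (f := ω) (f' := ω') (a := t₀) (b := T) (B := fun _ => a) (B' := fun _ => 0)
      (hcont.continuousOn)
      (fun x _ => (hderiv x).hasDerivWithinAt)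
      (le_refl a)
      (fun x => hasDerivAt_const x a)
      (fun x _ hx => by
        show ω' x < 0
        have h1 := hineq x
        have h2 : ω x = a := hx
        rw [h2] at h1
        linarith)
    exact fun s hs => this hs
  set c : ℝ := (a ^ 2 - B ^ 2) / a ^ 2 with hc
  have ha2pos : (0:ℝ) < a ^ 2 := by nlinarith
  have hcpos : 0 < c := div_pos (by linarith) ha2pos
  set T : ℝ := t₀ + (1 - 1/a) / c with hT
  have hTt : t₀ ≤ T := by
    have h1a : 1/a < 0 := div_neg_of_pos_of_neg one_pos haneg
    have hpos : 0 < (1 - 1/a) / c := div_pos (by linarith) hcpos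
    rw [hT]; linarith
  have hwle : ∀ s ∈ Icc t₀ T, ω s ≤ a := hinv T
  have hwne : ∀ s ∈ Icc t₀ T, ω s ≠ 0 := fun s hs => by
    have := hwle s hs; intro h; rw [h] at this; linarith
  -- apply MVT to 1/ω
  have key := Convex.mul_sub_le_image_sub_of_le_deriv (convex_Icc t₀ T)
    (f := fun s => (ω s)⁻¹) (C := c)
    (ContinuousOn.inv₀ hcont.continuousOn hwne)
    (fun x hx => ((hderiv x).inv (hwne x (interior_subset hx))).differentiableAt.differentiableWithinAt)
    (fun x hx => by
      have hxm : x ∈ Icc t₀ T := interior_subset hx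
      have hne := hwne x hxm
      have hd : HasDerivAt (fun s => (ω s)⁻¹) (-(ω' x) / ω x ^ 2) x := (hderiv x).inv hne
      rw [hd.deriv]
      have hw2 : a ^ 2 ≤ ω x ^ 2 := by nlinarith [hwle x hxm]
      rw [hc, div_le_div_iff₀ ha2pos (by positivity)]
      nlinarith [hineq x])
    t₀ (left_mem_Icc.2 hTt) T (right_mem_Icc.2 hTt) hTt
  have hTsub : c * (T - t₀) = 1 - 1/a := by
    rw [hT]; field_simp; ring
  have key2 : 1 - 1/a ≤ (ω T)⁻¹ - (ω t₀)⁻¹ := hTsub ▸ key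
  have hwT : ω T ≤ a := hwle T (right_mem_Icc.2 hTt)
  have hinvT : (ω T)⁻¹ < 0 := inv_lt_zero.mpr (by linarith)
  have h3 : (ω t₀)⁻¹ = 1/a := (one_div a).symm
  rw [h3] at key2
  linarith

/-- A globally defined subsolution of the Riccati inequality `ω' ≤ B² - ω²`
is bounded: `|ω(t)| ≤ B` for all `t`. -/
theorem riccati_global_bound
    (B : ℝ) (hB : 0 < B) (ω ω' : ℝ → ℝ)
    (hderiv : ∀ t, HasDerivAt ω (ω' t) t)
    (hineq : ∀ t, ω' t ≤ B ^ 2 - (ω t) ^ 2) :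
    ∀ t, |ω t| ≤ B := by
  have hlow := riccati_lower_aux B hB ω ω' hderiv hineq
  have hup : ∀ t, ω t ≤ B := by
    have h2 := riccati_lower_aux B hB (fun t => -ω (-t)) (fun t => ω' (-t))
      (fun t => by
        have : HasDerivAt (fun t => -ω (-t)) (-(ω' (-t) * -1)) t := ((hderiv (-t)).comp t (hasDerivAt_neg t)).neg
        convert this using 1
        ring)
      (fun t => by
        have := hineq (-t)
        simpa using this)
    intro t
    have := h2 (-t)
    simp only [neg_neg] at this
    linarith
  intro t
  exact abs_le.mpr ⟨hlow t, hup t⟩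
end

section
/- Let T ∈ ℝ and let ω : (T,∞) → ℝ be a differentiable function satisfying ω'(t) = −ω(t)² for all t > T. Then 0 ≤ ω(t) ≤ 1/(t − T) for all t > T. -/
open Set

lemma riccati_inv_incr (T : ℝ) (ω : ℝ → ℝ)
    (hderiv : ∀ t ∈ Ioi T, HasDerivAt ω (-(ω t) ^ 2) t)
    {a b : ℝ} (hTa : T < a) (hab : a < b)
    (hne : ∀ x ∈ Icc a b, ω x ≠ 0) :
    (ω b)⁻¹ - (ω a)⁻¹ = b - a := by
  have hmem : ∀ x ∈ Icc a b, x ∈ Ioi T := fun x hx => lt_of_lt_of_le hTa hx.1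
  have hcont : ContinuousOn (fun t => (ω t)⁻¹) (Icc a b) := fun x hx =>
    (((hderiv x (hmem x hx)).continuousAt).continuousWithinAt).inv₀ (hne x hx)
  have hdiff : ∀ x ∈ Ioo a b, HasDerivAt (fun t => (ω t)⁻¹) 1 x := by
    intro x hx
    have hx' : x ∈ Icc a b := ⟨hx.1.le, hx.2.le⟩
    have h := (hderiv x (hmem x hx')).inv (hne x hx')
    refine h.congr_deriv ?_
    have := hne x hx'
    rw [neg_neg, div_self (pow_ne_zero 2 this)]
  obtain ⟨c, _, hc⟩ := exists_hasDerivAt_eq_slope (fun t => (ω t)⁻¹) (fun _ => 1)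
    hab hcont hdiff
  have hba : b - a ≠ 0 := sub_ne_zero.mpr hab.ne'
  rw [eq_div_iff hba] at hc
  linarith

/-- A solution of the free Riccati equation `ω' = -ω²` defined on all of `(T, ∞)`
satisfies `0 ≤ ω(t) ≤ 1/(t - T)` there. -/
theorem riccati_free_halfline_bound
    (T : ℝ) (ω : ℝ → ℝ)
    (hderiv : ∀ t ∈ Ioi T, HasDerivAt ω (-(ω t) ^ 2) t) :
    ∀ t ∈ Ioi T, 0 ≤ ω t ∧ ω t ≤ 1 / (t - T) := by
  have hanti : AntitoneOn ω (Ioi T) := by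
    apply antitoneOn_of_deriv_nonpos (convex_Ioi T)
    · exact fun x hx => (hderiv x hx).continuousAt.continuousWithinAt
    · rw [interior_Ioi]
      exact fun x hx => (hderiv x hx).differentiableAt.differentiableWithinAt
    · rw [interior_Ioi]
      intro x hx
      rw [(hderiv x hx).deriv]
      exact neg_nonpos.mpr (sq_nonneg _)
  have hnonneg : ∀ t ∈ Ioi T, 0 ≤ ω t := by
    intro t ht
    by_contra hneg
    push_neg at hneg
    set b := t - (ω t)⁻¹ with hb
    have hωt : (ω t)⁻¹ < 0 := inv_neg''.mpr hneg
    have htb : t < b := by simp [hb]; linarith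
    have hne : ∀ x ∈ Icc t b, ω x ≠ 0 := by
      intro x hx
      have : ω x ≤ ω t := hanti ht (lt_of_lt_of_le ht hx.1) hx.1
      linarith
    have hkey := riccati_inv_incr T ω hderiv ht htb hne
    have hωb : ω b < 0 := by
      have : ω b ≤ ω t := hanti ht (ht.trans htb) htb.le
      linarith
    have hbt : b - t = -(ω t)⁻¹ := by simp [hb]
    have h0 : (ω b)⁻¹ = 0 := by linarith
    exact (inv_ne_zero hωb.ne) h0
  intro t ht
  refine ⟨hnonneg t ht, ?_⟩
  rcases eq_or_lt_of_le (hnonneg t ht) with h0 | hpos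
  · rw [← h0]
    have : (0:ℝ) < t - T := by have := ht.out; linarith
    positivity
  · -- ω t > 0; show t - T ≤ (ω t)⁻¹
    have hinv : ∀ s ∈ Ioo T t, t - s ≤ (ω t)⁻¹ := by
      intro s hs
      have hne : ∀ x ∈ Icc s t, ω x ≠ 0 := by
        intro x hx
        have : ω t ≤ ω x := hanti (lt_of_lt_of_le hs.1 hx.1) ht hx.2
        linarith
      have hkey := riccati_inv_incr T ω hderiv hs.1 hs.2 hne
      have hωs : 0 < ω s := lt_of_lt_of_le hpos (hanti hs.1 ht hs.2.le)
      have : 0 < (ω s)⁻¹ := inv_pos.mpr hωs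
      linarith
    have hle : t - T ≤ (ω t)⁻¹ := by
      by_contra hlt
      push_neg at hlt
      have hωinv : 0 < (ω t)⁻¹ := inv_pos.mpr hpos
      set s := (T + (t - (ω t)⁻¹)) / 2 with hs
      have hs1 : T < s := by simp [hs]; linarith
      have hs2 : s < t := by simp [hs]; linarith
      have := hinv s ⟨hs1, hs2⟩
      simp [hs] at this
      linarith
    rw [div_eq_inv_mul, mul_one]
    calc ω t = ((ω t)⁻¹)⁻¹ := (inv_inv _).symm
      _ ≤ (t - T)⁻¹ := by
          apply inv_anti₀ (by linarith [ht.out]) hle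
end

section
/- If ω : ℝ → ℝ is a differentiable function satisfying ω'(t) = −ω(t)² for all t ∈ ℝ, then ω is identically zero. -/
open Set

lemma riccati_nonneg
    (ω : ℝ → ℝ) (hderiv : ∀ t, HasDerivAt ω (-(ω t) ^ 2) t) :
    ∀ t, 0 ≤ ω t := by
  intro a
  by_contra hneg
  push_neg at hneg
  -- ω is antitone
  have hanti : Antitone ω :=
    antitone_of_hasDerivAt_nonpos hderiv (fun t => neg_nonpos.2 (sq_nonneg _))
  have hlt : ∀ t, a ≤ t → ω t < 0 := fun t ht => lt_of_le_of_lt (hanti ht) hneg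
  obtain ⟨b, hb⟩ : ∃ b : ℝ, b = a - (ω a)⁻¹ + 1 := ⟨_, rfl⟩
  have hua : (ω a)⁻¹ < 0 := inv_neg''.2 hneg
  have hab : a ≤ b := by linarith
  have hdf : ∀ x ∈ Icc a b, HasDerivAt (fun t => (ω t)⁻¹) 1 x := by
    intro x hx
    have hne : ω x ≠ 0 := (hlt x hx.1).ne
    have := (hderiv x).inv hne
    have h2 : -(-(ω x) ^ 2) / ω x ^ 2 = 1 := by
      field_simp
    rwa [h2] at this
  have key : ∀ y ∈ Icc a b, (ω y)⁻¹ = (ω a)⁻¹ + (y - a) := by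
    apply eq_of_has_deriv_right_eq (f' := fun _ => (1:ℝ))
    · intro x hx
      exact (hdf x (mem_Icc_of_Ico hx)).hasDerivWithinAt
    · intro x hx
      have : HasDerivAt (fun t : ℝ => (ω a)⁻¹ + (t - a)) 1 x := by
        simpa using ((hasDerivAt_id x).sub_const a).const_add (ω a)⁻¹
      exact this.hasDerivWithinAt
    · exact fun x hx => (hdf x hx).continuousAt.continuousWithinAt
    · exact (Continuous.continuousOn (by continuity))
    · simp
  have hb2 := key b ⟨hab, le_refl b⟩
  have : (ω b)⁻¹ < 0 := inv_neg''.2 (hlt b hab)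
  rw [hb2] at this
  have : (ω a)⁻¹ + (b - a) = 1 := by rw [hb]; ring
  linarith

/-- The only solution of the Riccati equation `ω' = -ω²` defined on all of `ℝ`
is the zero function. -/
theorem riccati_global_trivial
    (ω : ℝ → ℝ) (hderiv : ∀ t, HasDerivAt ω (-(ω t) ^ 2) t) :
    ∀ t, ω t = 0 := by
  intro t
  have h1 : 0 ≤ ω t := riccati_nonneg ω hderiv t
  -- apply to ν t = -ω (-t)
  have hν : ∀ s, HasDerivAt (fun s : ℝ => -ω (-s)) (-(-ω (-s)) ^ 2) s := by
    intro s
    have h0 : HasDerivAt (fun s : ℝ => -s) (-1) s := by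
      exact hasDerivAt_neg s
    have := ((hderiv (-s)).comp s h0).neg
    exact this.congr_deriv (by ring)
  have h2 : 0 ≤ -ω (-(-t)) := riccati_nonneg _ hν (-t)
  simp at h2
  linarith
end
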